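/- arXiv:2406.06152 — 5 statements merged into one kernel-verified Lean document; each statement's English description precedes it below -/
import Mathlib

section
/- Let S ⊆ ℤ² be a nonempty bounded M♮-convex set, and let λ₁ = min_{x∈S} x¹, μ₁ = max_{x∈S} x¹, λ₂ = min_{x∈S} x², μ₂ = max_{x∈S} x², λ₀ = min_{x∈S} (x¹+x²), μ₀ = max_{x∈S} (x¹+x²). Then S = { x ∈ ℤ² : λ₁ ≤ x¹ ≤ μ₁, λ₂ ≤ x² ≤ μ₂, λ₀ ≤ x¹+x² ≤ μ₀ }. -/
open Finset

/-- Embedding of `ℤ²` into `ℝ²`. -/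
def toR (x : Fin 2 → ℤ) : Fin 2 → ℝ := fun j => (x j : ℝ)

/-- `chi none = χ₀` is the zero vector, `chi (some i) = χ_i` is the `i`-th unit vector. -/
def chi : Option (Fin 2) → (Fin 2 → ℤ)
  | none => 0
  | some i => Pi.single i 1

/-- A set `S ⊆ ℤ²` is M♮-convex if for all `x, y ∈ S` and every index `i` with `x^i > y^i`
there exists `j` with `x^j < y^j` or `j = 0` such that `x − χ_i + χ_j ∈ S` and
`y + χ_i − χ_j ∈ S`. -/
def MnConvexSet (S : Set (Fin 2 → ℤ)) : Prop :=
  ∀ x ∈ S, ∀ y ∈ S, ∀ i : Fin 2, y i < x i →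
    ∃ j : Option (Fin 2), (∀ j', j = some j' → x j' < y j') ∧
      x - Pi.single i 1 + chi j ∈ S ∧ y + Pi.single i 1 - chi j ∈ S

/-- `T_Φ = { x ∈ ℤ²_{≥0} : x¹ + x² ≤ Φ }`. -/
def TPhi (Φ : ℤ) : Set (Fin 2 → ℤ) := {x | 0 ≤ x 0 ∧ 0 ≤ x 1 ∧ x 0 + x 1 ≤ Φ}

/-- M♮-concavity of a function on `T_Φ` (exchange property of its extension by `−∞`). -/
def MnConcaveOn (Φ : ℤ) (f : (Fin 2 → ℤ) → ℝ) : Prop :=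
  ∀ x ∈ TPhi Φ, ∀ y ∈ TPhi Φ, ∀ i : Fin 2, y i < x i →
    ∃ j : Option (Fin 2), (∀ j', j = some j' → x j' < y j') ∧
      x - Pi.single i 1 + chi j ∈ TPhi Φ ∧ y + Pi.single i 1 - chi j ∈ TPhi Φ ∧
      f x + f y ≤ f (x - Pi.single i 1 + chi j) + f (y + Pi.single i 1 - chi j)

noncomputable def lam1 (S : Set (Fin 2 → ℤ)) : ℤ := sInf ((fun x => x 0) '' S)
noncomputable def mu1 (S : Set (Fin 2 → ℤ)) : ℤ := sSup ((fun x => x 0) '' S)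
noncomputable def lam2 (S : Set (Fin 2 → ℤ)) : ℤ := sInf ((fun x => x 1) '' S)
noncomputable def mu2 (S : Set (Fin 2 → ℤ)) : ℤ := sSup ((fun x => x 1) '' S)
noncomputable def lam0 (S : Set (Fin 2 → ℤ)) : ℤ := sInf ((fun x => x 0 + x 1) '' S)
noncomputable def mu0 (S : Set (Fin 2 → ℤ)) : ℤ := sSup ((fun x => x 0 + x 1) '' S)

/-- Boundedness of a subset of `ℤ²`. -/
def BoundedSet (S : Set (Fin 2 → ℤ)) : Prop := ∃ M : ℤ, ∀ x ∈ S, |x 0| ≤ M ∧ |x 1| ≤ M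

/-- The quantity `ℓ_LH(S) − ℓ_UH(S) = (μ₁ − (λ₀ − λ₂)) − ((μ₀ − μ₂) − λ₁)`;
`S` is of positive-type if it is `> 0`, of zero-type if it equals `0`, and of
negative-type if it is `< 0`. -/
noncomputable def typeQ (S : Set (Fin 2 → ℤ)) : ℤ :=
  (mu1 S - (lam0 S - lam2 S)) - ((mu0 S - mu2 S) - lam1 S)

/-- `⟨p,x⟩ = p¹x¹ + p²x²`. -/
def inner2 (p : Fin 2 → ℝ) (x : Fin 2 → ℤ) : ℝ := p 0 * x 0 + p 1 * x 1

/-- The maximizer set `D_f(p)`. -/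
def maximizerSet (Φ : ℤ) (f : (Fin 2 → ℤ) → ℝ) (p : Fin 2 → ℝ) : Set (Fin 2 → ℤ) :=
  {x | x ∈ TPhi Φ ∧ ∀ y ∈ TPhi Φ, f y - inner2 p y ≤ f x - inner2 p x}

/-- A subset of `ℤ²` is two-dimensional if it is not contained in any affine line of `ℝ²`. -/
def TwoDimensional (S : Set (Fin 2 → ℤ)) : Prop :=
  ¬ ∃ a b c : ℝ, (a ≠ 0 ∨ b ≠ 0) ∧ ∀ x ∈ S, a * (x 0 : ℝ) + b * (x 1 : ℝ) = c

/-- Feasible assignments `y` for demand vector `x` and supplies `φ`. -/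
def FeasibleAssign {V : Type} [Fintype V] (φ : V → ℤ) (x : Fin 2 → ℤ)
    (y : V → Fin 2 → ℤ) : Prop :=
  (∀ i j, 0 ≤ y i j) ∧ (∀ j, ∑ i, y i j = x j) ∧ (∀ i, y i 0 + y i 1 ≤ φ i)

/-- `f` is the assignment valuation represented by `(V, w, φ)`. -/
def IsAssignmentValuation (Φ : ℤ) (f : (Fin 2 → ℤ) → ℝ) (V : Type) [Fintype V]
    (w : V → Fin 2 → ℝ) (φ : V → ℤ) : Prop :=
  (∀ i, 0 < φ i) ∧ (∑ i, φ i = Φ) ∧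
  ∀ x ∈ TPhi Φ, IsGreatest
    {s : ℝ | ∃ y : V → Fin 2 → ℤ, FeasibleAssign φ x y ∧
       s = ∑ i, (w i 0 * (y i 0 : ℝ) + w i 1 * (y i 1 : ℝ))} (f x)

/-- A hexagonalization of `T_Φ`: nonempty M♮-convex sets covering `T_Φ` whose convex hulls
have pairwise disjoint interiors. -/
def IsHexagonalization (Φ : ℤ) {q : ℕ} (H : Fin q → Set (Fin 2 → ℤ)) : Prop :=
  (∀ i, (H i).Nonempty) ∧ (∀ i, MnConvexSet (H i)) ∧ (⋃ i, H i) = TPhi Φ ∧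
  ∀ i j : Fin q, i ≠ j →
    interior (convexHull ℝ (toR '' H i)) ∩ interior (convexHull ℝ (toR '' H j)) = ∅

/-- A feasible hexagonalization: every member is of positive- or zero-type, and at least one
member is of positive-type. -/
def IsFeasibleHex (Φ : ℤ) {q : ℕ} (H : Fin q → Set (Fin 2 → ℤ)) : Prop :=
  IsHexagonalization Φ H ∧ (∀ i, 0 ≤ typeQ (H i)) ∧ ∃ i, 0 < typeQ (H i)

lemma fin2_other {i k j : Fin 2} (h1 : k ≠ i) (h2 : j ≠ i) : j = k := by
  fin_cases i <;> fin_cases k <;> fin_cases j <;> simp_all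

lemma exch {S : Set (Fin 2 → ℤ)} (hM : MnConvexSet S) {x y : Fin 2 → ℤ}
    (hx : x ∈ S) (hy : y ∈ S) {i k : Fin 2} (hik : k ≠ i) (h : y i < x i) :
    (x - Pi.single i 1 ∈ S ∧ y + Pi.single i 1 ∈ S) ∨
    (x k < y k ∧ x - Pi.single i 1 + Pi.single k 1 ∈ S ∧
      y + Pi.single i 1 - Pi.single k 1 ∈ S) := by
  obtain ⟨j, hj, h1, h2⟩ := hM x hx y hy i h
  cases j with
  | none =>
      left
      exact ⟨by simpa [chi] using h1, by simpa [chi] using h2⟩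
  | some j' =>
      have hxy := hj j' rfl
      by_cases hji : j' = i
      · exact absurd (hji ▸ hxy) (not_lt.2 h.le)
      · have hjk : j' = k := fin2_other hik hji
        subst hjk
        exact Or.inr ⟨hxy, by simpa [chi] using h1, by simpa [chi] using h2⟩

lemma csub {i k : Fin 2} (hik : k ≠ i) (x : Fin 2 → ℤ) :
    (x - Pi.single i 1 : Fin 2 → ℤ) i = x i - 1 ∧
    (x - Pi.single i 1 : Fin 2 → ℤ) k = x k := by
  have hik' : i ≠ k := Ne.symm hik
  constructor <;> simp [Pi.single_apply, hik, hik']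

lemma cadd {i k : Fin 2} (hik : k ≠ i) (x : Fin 2 → ℤ) :
    (x + Pi.single i 1 : Fin 2 → ℤ) i = x i + 1 ∧
    (x + Pi.single i 1 : Fin 2 → ℤ) k = x k := by
  have hik' : i ≠ k := Ne.symm hik
  constructor <;> simp [Pi.single_apply, hik, hik']

lemma csubadd {i k : Fin 2} (hik : k ≠ i) (x : Fin 2 → ℤ) :
    (x - Pi.single i 1 + Pi.single k 1 : Fin 2 → ℤ) i = x i - 1 ∧
    (x - Pi.single i 1 + Pi.single k 1 : Fin 2 → ℤ) k = x k + 1 := by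
  have hik' : i ≠ k := Ne.symm hik
  constructor <;> simp [Pi.single_apply, hik, hik']

lemma caddsub {i k : Fin 2} (hik : k ≠ i) (x : Fin 2 → ℤ) :
    (x + Pi.single i 1 - Pi.single k 1 : Fin 2 → ℤ) i = x i + 1 ∧
    (x + Pi.single i 1 - Pi.single k 1 : Fin 2 → ℤ) k = x k - 1 := by
  have hik' : i ≠ k := Ne.symm hik
  constructor <;> simp [Pi.single_apply, hik, hik']

lemma lemA {S : Set (Fin 2 → ℤ)} (hM : MnConvexSet S) {i k : Fin 2} (hik : k ≠ i)
    {x : Fin 2 → ℤ} (hx : x ∈ S) :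
    ∀ n : ℕ, ∀ y ∈ S, y i + y k < x i + x k →
      (x i - y i).natAbs + (x k - y k).natAbs ≤ n →
      x - Pi.single i 1 ∈ S ∨ x - Pi.single k 1 ∈ S := by
  have hik' : i ≠ k := Ne.symm hik
  intro n
  induction n with
  | zero => intro y hy hsum hm; omega
  | succ n ih =>
      intro y hy hsum hm
      rcases lt_or_ge (y i) (x i) with hlt | hge
      · rcases exch hM hx hy hik hlt with ⟨h1, _⟩ | ⟨hk, _, h2⟩
        · exact Or.inl h1
        · have e1 := (caddsub hik y).1
          have e2 := (caddsub hik y).2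
          exact ih _ h2 (by omega) (by omega)
      · have hltk : y k < x k := by omega
        rcases exch hM hx hy hik' hltk with ⟨h1, _⟩ | ⟨hk, _, h2⟩
        · exact Or.inr h1
        · have e1 := (caddsub hik' y).1
          have e2 := (caddsub hik' y).2
          exact ih _ h2 (by omega) (by omega)

/-- Case-2 sub-induction A2 : under `HY`, a low-sum point with small `i`-coordinate
lets us remove `χ_i` from `x`. -/
lemma lemB {S : Set (Fin 2 → ℤ)} (hM : MnConvexSet S) {i k : Fin 2} (hik : k ≠ i)
    {x z : Fin 2 → ℤ} (hx : x ∈ S) (hzi : z i < x i) (hzk : x k = z k)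
    (HY : ∀ w ∈ S, w i < x i → x k < w k) :
    ∀ n : ℕ, ∀ m ∈ S, m i + m k ≤ z i + z k → m i < x i → (m k - x k).toNat ≤ n →
      x - Pi.single i 1 ∈ S := by
  intro n
  induction n with
  | zero =>
      intro m hm hsum hmi hcnt
      have := HY m hm hmi
      omega
  | succ n ih =>
      intro m hm hsum hmi hcnt
      have hky := HY m hm hmi
      rcases exch hM hx hm hik hmi with ⟨h1, _⟩ | ⟨hk, _, h2⟩
      · exact h1
      · have e1 := (caddsub hik m).1
        have e2 := (caddsub hik m).2
        exact ih _ h2 (by omega) (by omega) (by omega)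

/-- Case-2 sub-induction B2 : under `HY`, a minimum-sum point with large `i`-coordinate
is impossible. -/
lemma lemC {S : Set (Fin 2 → ℤ)} (hM : MnConvexSet S) {i k : Fin 2} (hik : k ≠ i)
    {x z u : Fin 2 → ℤ} (hx : x ∈ S) (hzi : z i < x i) (hzk : x k = z k)
    (HY : ∀ w ∈ S, w i < x i → x k < w k) (hu : u ∈ S) (hui : u i ≤ z i) :
    ∀ n : ℕ, ∀ m ∈ S, (∀ w ∈ S, m i + m k ≤ w i + w k) → m i + m k ≤ z i + z k →
      x i ≤ m i → (m i - x i).toNat ≤ n → False := by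
  intro n
  induction n with
  | zero =>
      intro m hm hmin hsum hxm hcnt
      -- here m i = x i
      have hmk : m k < x k := by omega
      have hui' : u i < m i := by omega
      rcases exch hM hm hu hik hui' with ⟨h1, _⟩ | ⟨hk', h1, _⟩
      · have e1 := (csub hik m).1
        have e2 := (csub hik m).2
        have := HY _ h1 (by omega)
        omega
      · have e1 := (csubadd hik m).1
        have e2 := (csubadd hik m).2
        have := HY _ h1 (by omega)
        omega
  | succ n ih =>
      intro m hm hmin hsum hxm hcnt
      have hmk : m k < x k := by omega
      rcases lt_or_ge (x i) (m i) with hlt | hle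
      · rcases exch hM hm hx hik hlt with ⟨h1, _⟩ | ⟨hk', h1, _⟩
        · have e1 := (csub hik m).1
          have e2 := (csub hik m).2
          have := hmin _ h1
          omega
        · have e1 := (csubadd hik m).1
          have e2 := (csubadd hik m).2
          refine ih _ h1 ?_ (by omega) (by omega) (by omega)
          intro w hw
          have := hmin w hw
          omega
      · -- m i = x i : same as base case
        have hui' : u i < m i := by omega
        rcases exch hM hm hu hik hui' with ⟨h1, _⟩ | ⟨hk', h1, _⟩
        · have e1 := (csub hik m).1
          have e2 := (csub hik m).2
          have := HY _ h1 (by omega)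
          omega
        · have e1 := (csubadd hik m).1
          have e2 := (csubadd hik m).2
          have := HY _ h1 (by omega)
          omega

/-- The main step lemma: if `z i < x i` and suitable extreme points exist,
there is a point of `S` strictly closer to `z` in the `ℓ¹`-distance. -/
lemma stepMain {S : Set (Fin 2 → ℤ)} (hM : MnConvexSet S) {i k : Fin 2} (hik : k ≠ i)
    {x z : Fin 2 → ℤ} (hx : x ∈ S) (hzi : z i < x i)
    (hu : ∃ u ∈ S, u i ≤ z i) (hv : ∃ v ∈ S, z k ≤ v k)
    (hm : ∃ m ∈ S, m i + m k ≤ z i + z k ∧ ∀ w ∈ S, m i + m k ≤ w i + w k) :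
    ∃ x' ∈ S, (x' i - z i).natAbs + (x' k - z k).natAbs <
      (x i - z i).natAbs + (x k - z k).natAbs := by
  have hik' : i ≠ k := Ne.symm hik
  rcases lt_trichotomy (x k) (z k) with hlt | heq | hgt
  · -- case 3 : x k < z k
    obtain ⟨v, hvS, hvk⟩ := hv
    have hxv : x k < v k := lt_of_lt_of_le hlt hvk
    rcases exch hM hvS hx hik' hxv with ⟨_, h2⟩ | ⟨hk', _, h2⟩
    · refine ⟨_, h2, ?_⟩
      have e1 := (cadd hik' x).1
      have e2 := (cadd hik' x).2
      omega
    · refine ⟨_, h2, ?_⟩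
      have e1 := (caddsub hik' x).1
      have e2 := (caddsub hik' x).2
      omega
  · -- case 2 : x k = z k
    by_cases hw : ∃ w ∈ S, w i < x i ∧ w k ≤ x k
    · obtain ⟨w, hwS, hwi, hwk⟩ := hw
      rcases exch hM hx hwS hik hwi with ⟨h1, _⟩ | ⟨hk', _, _⟩
      · refine ⟨_, h1, ?_⟩
        have e1 := (csub hik x).1
        have e2 := (csub hik x).2
        omega
      · omega
    · push_neg at hw
      have HY : ∀ w ∈ S, w i < x i → x k < w k := fun w hwS hwi => hw w hwS hwi
      obtain ⟨m, hmS, hmsum, hmmin⟩ := hm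
      rcases lt_or_ge (m i) (x i) with hmi | hmi
      · have h1 := lemB hM hik hx hzi heq HY (m k - x k).toNat m hmS hmsum hmi le_rfl
        refine ⟨_, h1, ?_⟩
        have e1 := (csub hik x).1
        have e2 := (csub hik x).2
        omega
      · obtain ⟨u, huS, hui⟩ := hu
        exact absurd (lemC hM hik hx hzi heq HY huS hui (m i - x i).toNat m hmS hmmin
          hmsum hmi le_rfl) (by simp)
  · -- case 1 : z k < x k
    obtain ⟨m, hmS, hmsum, _⟩ := hm
    have hsum : m i + m k < x i + x k := by omega
    rcases lemA hM hik hx ((x i - m i).natAbs + (x k - m k).natAbs) m hmS hsum le_rfl with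
      h1 | h1
    · refine ⟨_, h1, ?_⟩
      have e1 := (csub hik x).1
      have e2 := (csub hik x).2
      omega
    · refine ⟨_, h1, ?_⟩
      have e1 := (csub hik' x).1
      have e2 := (csub hik' x).2
      omega

/-- Negation preserves M♮-convexity. -/
lemma mn_neg {S : Set (Fin 2 → ℤ)} (hM : MnConvexSet S) :
    MnConvexSet {v : Fin 2 → ℤ | -v ∈ S} := by
  intro x hx y hy i h
  have h' : (-x : Fin 2 → ℤ) i < (-y) i := by
    simp only [Pi.neg_apply]
    omega
  obtain ⟨j, hj, h1, h2⟩ := hM (-y) hy (-x) hx i h'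
  refine ⟨j, ?_, ?_, ?_⟩
  · intro j' hjj
    have := hj j' hjj
    simp only [Pi.neg_apply] at this
    omega
  · show -(x - Pi.single i 1 + chi j) ∈ S
    have e : -(x - Pi.single i 1 + chi j) = -x + Pi.single i 1 - chi j := by abel
    rw [e]; exact h2
  · show -(y + Pi.single i 1 - chi j) ∈ S
    have e : -(y + Pi.single i 1 - chi j) = -y - Pi.single i 1 + chi j := by abel
    rw [e]; exact h1

theorem stmt0 (S : Set (Fin 2 → ℤ)) (hne : S.Nonempty) (hbd : BoundedSet S)
    (hM : MnConvexSet S) :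
    S = {x : Fin 2 → ℤ | lam1 S ≤ x 0 ∧ x 0 ≤ mu1 S ∧ lam2 S ≤ x 1 ∧ x 1 ≤ mu2 S ∧
         lam0 S ≤ x 0 + x 1 ∧ x 0 + x 1 ≤ mu0 S} := by
  obtain ⟨M, hMb⟩ := hbd
  have hbb0 : BddBelow ((fun x => x 0) '' S) := by
    refine ⟨-M, ?_⟩; rintro a ⟨v, hv, rfl⟩
    have := abs_le.mp (hMb v hv).1; show -M ≤ v 0; omega
  have hba0 : BddAbove ((fun x => x 0) '' S) := by
    refine ⟨M, ?_⟩; rintro a ⟨v, hv, rfl⟩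
    have := abs_le.mp (hMb v hv).1; show v 0 ≤ M; omega
  have hbb1 : BddBelow ((fun x => x 1) '' S) := by
    refine ⟨-M, ?_⟩; rintro a ⟨v, hv, rfl⟩
    have := abs_le.mp (hMb v hv).2; show -M ≤ v 1; omega
  have hba1 : BddAbove ((fun x => x 1) '' S) := by
    refine ⟨M, ?_⟩; rintro a ⟨v, hv, rfl⟩
    have := abs_le.mp (hMb v hv).2; show v 1 ≤ M; omega
  have hbbS : BddBelow ((fun x => x 0 + x 1) '' S) := by
    refine ⟨-M - M, ?_⟩; rintro a ⟨v, hv, rfl⟩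
    have h1 := abs_le.mp (hMb v hv).1; have h2 := abs_le.mp (hMb v hv).2
    show -M - M ≤ v 0 + v 1; omega
  have hbaS : BddAbove ((fun x => x 0 + x 1) '' S) := by
    refine ⟨M + M, ?_⟩; rintro a ⟨v, hv, rfl⟩
    have h1 := abs_le.mp (hMb v hv).1; have h2 := abs_le.mp (hMb v hv).2
    show v 0 + v 1 ≤ M + M; omega
  -- attainers
  obtain ⟨ul0, hul0S, hul0⟩ : ∃ u ∈ S, u 0 = lam1 S := by
    simpa [lam1] using Int.csInf_mem (hne.image _) hbb0
  obtain ⟨uh0, huh0S, huh0⟩ : ∃ u ∈ S, u 0 = mu1 S := by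
    simpa [mu1] using Int.csSup_mem (hne.image _) hba0
  obtain ⟨ul1, hul1S, hul1⟩ : ∃ u ∈ S, u 1 = lam2 S := by
    simpa [lam2] using Int.csInf_mem (hne.image _) hbb1
  obtain ⟨uh1, huh1S, huh1⟩ : ∃ u ∈ S, u 1 = mu2 S := by
    simpa [mu2] using Int.csSup_mem (hne.image _) hba1
  obtain ⟨ms, hmsS, hms⟩ : ∃ u ∈ S, u 0 + u 1 = lam0 S := by
    simpa [lam0] using Int.csInf_mem (hne.image _) hbbS
  obtain ⟨mS, hmSS, hmS⟩ : ∃ u ∈ S, u 0 + u 1 = mu0 S := by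
    simpa [mu0] using Int.csSup_mem (hne.image _) hbaS
  have hl1 : ∀ v ∈ S, lam1 S ≤ v 0 := fun v hv => csInf_le hbb0 ⟨v, hv, rfl⟩
  have hm1 : ∀ v ∈ S, v 0 ≤ mu1 S := fun v hv => le_csSup hba0 ⟨v, hv, rfl⟩
  have hl2 : ∀ v ∈ S, lam2 S ≤ v 1 := fun v hv => csInf_le hbb1 ⟨v, hv, rfl⟩
  have hm2 : ∀ v ∈ S, v 1 ≤ mu2 S := fun v hv => le_csSup hba1 ⟨v, hv, rfl⟩
  have hl0 : ∀ v ∈ S, lam0 S ≤ v 0 + v 1 := fun v hv => csInf_le hbbS ⟨v, hv, rfl⟩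
  have hm0 : ∀ v ∈ S, v 0 + v 1 ≤ mu0 S := fun v hv => le_csSup hbaS ⟨v, hv, rfl⟩
  have h10 : (1 : Fin 2) ≠ 0 := by decide
  have h01 : (0 : Fin 2) ≠ 1 := by decide
  ext w
  simp only [Set.mem_setOf_eq]
  constructor
  · intro hw
    exact ⟨hl1 w hw, hm1 w hw, hl2 w hw, hm2 w hw, hl0 w hw, hm0 w hw⟩
  · rintro ⟨hz1, hz2, hz3, hz4, hz5, hz6⟩
    set T : Set ℕ := {n | ∃ x ∈ S, (x 0 - w 0).natAbs + (x 1 - w 1).natAbs = n} with hT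
    have hTne : T.Nonempty := by
      obtain ⟨v, hv⟩ := hne
      exact ⟨_, v, hv, rfl⟩
    obtain ⟨x, hxS, hxm⟩ := Nat.sInf_mem hTne
    by_cases h0 : (x 0 - w 0).natAbs + (x 1 - w 1).natAbs = 0
    · have e0 : x 0 = w 0 := by omega
      have e1 : x 1 = w 1 := by omega
      have : x = w := by
        funext j; fin_cases j
        · exact e0
        · exact e1
      exact this ▸ hxS
    · exfalso
      have key : ∃ x' ∈ S, (x' 0 - w 0).natAbs + (x' 1 - w 1).natAbs <
          (x 0 - w 0).natAbs + (x 1 - w 1).natAbs := by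
        rcases lt_trichotomy (w 0) (x 0) with hlt0 | heq0 | hgt0
        · -- w 0 < x 0 : step with i = 0, k = 1 on S
          refine stepMain hM h10 hxS hlt0 ⟨ul0, hul0S, by omega⟩ ⟨uh1, huh1S, by omega⟩
            ⟨ms, hmsS, by omega, fun v hv => by have := hl0 v hv; omega⟩
        · -- w 0 = x 0 : move in coordinate 1
          rcases lt_trichotomy (w 1) (x 1) with hlt1 | heq1 | hgt1
          · -- step with i = 1, k = 0 on S
            obtain ⟨x', hx', hm'⟩ := stepMain hM h01 hxS hlt1 ⟨ul1, hul1S, by omega⟩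
              ⟨uh0, huh0S, by omega⟩
              ⟨ms, hmsS, by omega, fun v hv => by have := hl0 v hv; omega⟩
            exact ⟨x', hx', by omega⟩
          · omega
          · -- negated step with i = 1
            obtain ⟨x', hx', hm'⟩ := stepMain (S := {v : Fin 2 → ℤ | -v ∈ S}) (mn_neg hM)
              h01 (x := -x) (z := -w) (by simpa using hxS)
              (by simp only [Pi.neg_apply]; omega)
              ⟨-uh1, by simpa using huh1S, by simp only [Pi.neg_apply]; omega⟩
              ⟨-ul0, by simpa using hul0S, by simp only [Pi.neg_apply]; omega⟩
              ⟨-mS, by simpa using hmSS, by simp only [Pi.neg_apply]; omega,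
                fun v hv => by
                  have := hm0 (-v) hv
                  simp only [Pi.neg_apply] at this ⊢
                  omega⟩
            refine ⟨-x', hx', ?_⟩
            simp only [Pi.neg_apply] at hm' ⊢
            omega
        · -- x 0 < w 0 : negated step with i = 0
          obtain ⟨x', hx', hm'⟩ := stepMain (S := {v : Fin 2 → ℤ | -v ∈ S}) (mn_neg hM)
            h10 (x := -x) (z := -w) (by simpa using hxS)
            (by simp only [Pi.neg_apply]; omega)
            ⟨-uh0, by simpa using huh0S, by simp only [Pi.neg_apply]; omega⟩
            ⟨-ul1, by simpa using hul1S, by simp only [Pi.neg_apply]; omega⟩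
            ⟨-mS, by simpa using hmSS, by simp only [Pi.neg_apply]; omega,
              fun v hv => by
                have := hm0 (-v) hv
                simp only [Pi.neg_apply] at this ⊢
                omega⟩
          refine ⟨-x', hx', ?_⟩
          simp only [Pi.neg_apply] at hm' ⊢
          omega
      obtain ⟨x', hx'S, hx'm⟩ := key
      have hle : sInf T ≤ (x' 0 - w 0).natAbs + (x' 1 - w 1).natAbs :=
        Nat.sInf_le ⟨x', hx'S, rfl⟩
      omega
end

section
/- Let S ⊆ ℤ² be a nonempty bounded M♮-convex set. Then the integer points of the convex hull of S (taken in ℝ²) are exactly S, that is, conv(S) ∩ ℤ² = S. -/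
open Finset

namespace Stmt2Aux

variable {S : Set (Fin 2 → ℤ)}

lemma mem_congr {a b : Fin 2 → ℤ} (h : a ∈ S) (h0 : a 0 = b 0) (h1 : a 1 = b 1) : b ∈ S := by
  have hab : a = b := by
    funext k
    have : k = 0 ∨ k = 1 := by omega
    rcases this with rfl | rfl
    · exact h0
    · exact h1
  exact hab ▸ h

/-- L1: if `y 0 < x 0` and `sum y < sum x` then `x - χ₀ ∈ S`. -/
lemma down0 (hM : MnConvexSet S) : ∀ N : ℕ, ∀ x ∈ S, ∀ y ∈ S,
    (y 1 - x 1).toNat ≤ N → y 0 < x 0 → y 0 + y 1 < x 0 + x 1 →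
    x - Pi.single 0 1 ∈ S := by
  intro N
  induction N with
  | zero =>
    intro x hx y hy hN h0 hs
    obtain ⟨j, hj, h1, h2⟩ := hM x hx y hy 0 h0
    obtain _ | j := j
    · exact mem_congr h1 (by simp [chi]) (by simp [chi])
    · have hj01 : j = 0 ∨ j = 1 := by omega
      rcases hj01 with rfl | rfl
      · have := hj _ rfl; omega
      · have := hj _ rfl; omega
  | succ N ih =>
    intro x hx y hy hN h0 hs
    obtain ⟨j, hj, h1, h2⟩ := hM x hx y hy 0 h0
    obtain _ | j := j
    · exact mem_congr h1 (by simp [chi]) (by simp [chi])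
    · have hj01 : j = 0 ∨ j = 1 := by omega
      rcases hj01 with rfl | rfl
      · have := hj _ rfl; omega
      · have hxy1 : x 1 < y 1 := hj _ rfl
        have c0 : (y + Pi.single 0 1 - chi (some 1) : Fin 2 → ℤ) 0 = y 0 + 1 := by simp [chi]
        have c1 : (y + Pi.single 0 1 - chi (some 1) : Fin 2 → ℤ) 1 = y 1 - 1 := by simp [chi]
        exact ih x hx _ h2 (by omega) (by omega) (by omega)

/-- L2: if `y 1 < x 1` and `sum y < sum x` then `x - χ₁ ∈ S`. -/
lemma down1 (hM : MnConvexSet S) : ∀ N : ℕ, ∀ x ∈ S, ∀ y ∈ S,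
    (y 0 - x 0).toNat ≤ N → y 1 < x 1 → y 0 + y 1 < x 0 + x 1 →
    x - Pi.single 1 1 ∈ S := by
  intro N
  induction N with
  | zero =>
    intro x hx y hy hN h1' hs
    obtain ⟨j, hj, h1, h2⟩ := hM x hx y hy 1 h1'
    obtain _ | j := j
    · exact mem_congr h1 (by simp [chi]) (by simp [chi])
    · have hj01 : j = 0 ∨ j = 1 := by omega
      rcases hj01 with rfl | rfl
      · have := hj _ rfl; omega
      · have := hj _ rfl; omega
  | succ N ih =>
    intro x hx y hy hN h1' hs
    obtain ⟨j, hj, h1, h2⟩ := hM x hx y hy 1 h1'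
    obtain _ | j := j
    · exact mem_congr h1 (by simp [chi]) (by simp [chi])
    · have hj01 : j = 0 ∨ j = 1 := by omega
      rcases hj01 with rfl | rfl
      · have hxy0 : x 0 < y 0 := hj _ rfl
        have c0 : (y + Pi.single 1 1 - chi (some 0) : Fin 2 → ℤ) 0 = y 0 - 1 := by simp [chi]
        have c1 : (y + Pi.single 1 1 - chi (some 0) : Fin 2 → ℤ) 1 = y 1 + 1 := by simp [chi]
        exact ih x hx _ h2 (by omega) (by omega) (by omega)
      · have := hj _ rfl; omega

/-- L1⁻: if `x 0 < y 0` and `sum x < sum y` then `x + χ₀ ∈ S`. -/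
lemma up0 (hM : MnConvexSet S) : ∀ N : ℕ, ∀ x ∈ S, ∀ y ∈ S,
    (x 1 - y 1).toNat ≤ N → x 0 < y 0 → x 0 + x 1 < y 0 + y 1 →
    x + Pi.single 0 1 ∈ S := by
  intro N
  induction N with
  | zero =>
    intro x hx y hy hN h0 hs
    obtain ⟨j, hj, h1, h2⟩ := hM y hy x hx 0 h0
    obtain _ | j := j
    · exact mem_congr h2 (by simp [chi]) (by simp [chi])
    · have hj01 : j = 0 ∨ j = 1 := by omega
      rcases hj01 with rfl | rfl
      · have := hj _ rfl; omega
      · have := hj _ rfl; omega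
  | succ N ih =>
    intro x hx y hy hN h0 hs
    obtain ⟨j, hj, h1, h2⟩ := hM y hy x hx 0 h0
    obtain _ | j := j
    · exact mem_congr h2 (by simp [chi]) (by simp [chi])
    · have hj01 : j = 0 ∨ j = 1 := by omega
      rcases hj01 with rfl | rfl
      · have := hj _ rfl; omega
      · have hy1x1 : y 1 < x 1 := hj _ rfl
        have c0 : (y - Pi.single 0 1 + chi (some 1) : Fin 2 → ℤ) 0 = y 0 - 1 := by simp [chi]
        have c1 : (y - Pi.single 0 1 + chi (some 1) : Fin 2 → ℤ) 1 = y 1 + 1 := by simp [chi]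
        exact ih x hx _ h1 (by omega) (by omega) (by omega)

/-- L2⁻: if `x 1 < y 1` and `sum x < sum y` then `x + χ₁ ∈ S`. -/
lemma up1 (hM : MnConvexSet S) : ∀ N : ℕ, ∀ x ∈ S, ∀ y ∈ S,
    (x 0 - y 0).toNat ≤ N → x 1 < y 1 → x 0 + x 1 < y 0 + y 1 →
    x + Pi.single 1 1 ∈ S := by
  intro N
  induction N with
  | zero =>
    intro x hx y hy hN h1' hs
    obtain ⟨j, hj, h1, h2⟩ := hM y hy x hx 1 h1'
    obtain _ | j := j
    · exact mem_congr h2 (by simp [chi]) (by simp [chi])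
    · have hj01 : j = 0 ∨ j = 1 := by omega
      rcases hj01 with rfl | rfl
      · have := hj _ rfl; omega
      · have := hj _ rfl; omega
  | succ N ih =>
    intro x hx y hy hN h1' hs
    obtain ⟨j, hj, h1, h2⟩ := hM y hy x hx 1 h1'
    obtain _ | j := j
    · exact mem_congr h2 (by simp [chi]) (by simp [chi])
    · have hj01 : j = 0 ∨ j = 1 := by omega
      rcases hj01 with rfl | rfl
      · have hy0x0 : y 0 < x 0 := hj _ rfl
        have c0 : (y - Pi.single 1 1 + chi (some 0) : Fin 2 → ℤ) 0 = y 0 + 1 := by simp [chi]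
        have c1 : (y - Pi.single 1 1 + chi (some 0) : Fin 2 → ℤ) 1 = y 1 - 1 := by simp [chi]
        exact ih x hx _ h1 (by omega) (by omega) (by omega)
      · have := hj _ rfl; omega

/-- L3: if `y 0 < x 0` and `x 1 < y 1` then `x - χ₀ + χ₁ ∈ S`. -/
lemma swap01 (hM : MnConvexSet S) {x y : Fin 2 → ℤ} (hx : x ∈ S) (hy : y ∈ S)
    (h0 : y 0 < x 0) (h1 : x 1 < y 1) :
    x - Pi.single 0 1 + Pi.single 1 1 ∈ S := by
  obtain ⟨j, hj, ha, hb⟩ := hM x hx y hy 0 h0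
  obtain _ | j := j
  · -- x - χ₀ ∈ S
    have hA : x - Pi.single 0 1 ∈ S := mem_congr ha (by simp [chi]) (by simp [chi])
    obtain ⟨j2, hj2, hc, hd⟩ := hM y hy x hx 1 h1
    obtain _ | j2 := j2
    · -- x + χ₁ ∈ S
      have hB : x + Pi.single 1 1 ∈ S := mem_congr hd (by simp [chi]) (by simp [chi])
      have hlt : (x - Pi.single 0 1 : Fin 2 → ℤ) 0 < (x + Pi.single 1 1 : Fin 2 → ℤ) 0 := by
        simp
      obtain ⟨j3, hj3, he, hf⟩ := hM _ hB _ hA 0 hlt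
      obtain _ | j3 := j3
      · exact mem_congr he (by simp [chi]) (by simp [chi])
      · have hj01 : j3 = 0 ∨ j3 = 1 := by omega
        rcases hj01 with rfl | rfl
        · have h := hj3 _ rfl; simp at h <;> omega
        · have h := hj3 _ rfl; simp at h <;> omega
    · have hj01 : j2 = 0 ∨ j2 = 1 := by omega
      rcases hj01 with rfl | rfl
      · exact mem_congr hd (by simp [chi]) (by simp [chi])
      · have := hj2 _ rfl; omega
  · have hj01 : j = 0 ∨ j = 1 := by omega
    rcases hj01 with rfl | rfl
    · have := hj _ rfl; omega
    · exact mem_congr ha (by simp [chi]) (by simp [chi])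

/-- L3': if `y 1 < x 1` and `x 0 < y 0` then `x - χ₁ + χ₀ ∈ S`. -/
lemma swap10 (hM : MnConvexSet S) {x y : Fin 2 → ℤ} (hx : x ∈ S) (hy : y ∈ S)
    (h1 : y 1 < x 1) (h0 : x 0 < y 0) :
    x - Pi.single 1 1 + Pi.single 0 1 ∈ S := by
  obtain ⟨j, hj, ha, hb⟩ := hM x hx y hy 1 h1
  obtain _ | j := j
  · have hA : x - Pi.single 1 1 ∈ S := mem_congr ha (by simp [chi]) (by simp [chi])
    obtain ⟨j2, hj2, hc, hd⟩ := hM y hy x hx 0 h0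
    obtain _ | j2 := j2
    · have hB : x + Pi.single 0 1 ∈ S := mem_congr hd (by simp [chi]) (by simp [chi])
      have hlt : (x - Pi.single 1 1 : Fin 2 → ℤ) 1 < (x + Pi.single 0 1 : Fin 2 → ℤ) 1 := by
        simp
      obtain ⟨j3, hj3, he, hf⟩ := hM _ hB _ hA 1 hlt
      obtain _ | j3 := j3
      · exact mem_congr he (by simp [chi]) (by simp [chi])
      · have hj01 : j3 = 0 ∨ j3 = 1 := by omega
        rcases hj01 with rfl | rfl
        · have h := hj3 _ rfl; simp at h <;> omega
        · have h := hj3 _ rfl; simp at h <;> omega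
    · have hj01 : j2 = 0 ∨ j2 = 1 := by omega
      rcases hj01 with rfl | rfl
      · have := hj2 _ rfl; omega
      · exact mem_congr hd (by simp [chi]) (by simp [chi])
  · have hj01 : j = 0 ∨ j = 1 := by omega
    rcases hj01 with rfl | rfl
    · exact mem_congr ha (by simp [chi]) (by simp [chi])
    · have := hj _ rfl; omega

/-- M1: witnesses `u 0 < x 0` and `sum y < sum x` (possibly different points) give `x - χ₀ ∈ S`. -/
lemma em1 (hM : MnConvexSet S) : ∀ N : ℕ, ∀ x ∈ S, ∀ y ∈ S, ∀ u ∈ S,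
    (y 0 + 1 - x 0).toNat ≤ N → u 0 < x 0 → y 0 + y 1 < x 0 + x 1 →
    x - Pi.single 0 1 ∈ S := by
  intro N
  induction N with
  | zero =>
    intro x hx y hy u hu hN h0 hs
    exact down0 hM _ x hx y hy le_rfl (by omega) hs
  | succ N ih =>
    intro x hx y hy u hu hN h0 hs
    by_cases hc : y 0 < x 0
    · exact down0 hM _ x hx y hy le_rfl hc hs
    · obtain ⟨j, hj, h1, h2⟩ := hM y hy u hu 0 (by omega)
      obtain _ | j := j
      · have hy' : y - Pi.single 0 1 ∈ S := mem_congr h1 (by simp [chi]) (by simp [chi])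
        have c0 : (y - Pi.single 0 1 : Fin 2 → ℤ) 0 = y 0 - 1 := by simp
        have c1 : (y - Pi.single 0 1 : Fin 2 → ℤ) 1 = y 1 := by simp
        exact ih x hx _ hy' u hu (by omega) h0 (by omega)
      · have hj01 : j = 0 ∨ j = 1 := by omega
        rcases hj01 with rfl | rfl
        · have := hj _ rfl; omega
        · have c0 : (y - Pi.single 0 1 + chi (some 1) : Fin 2 → ℤ) 0 = y 0 - 1 := by simp [chi]
          have c1 : (y - Pi.single 0 1 + chi (some 1) : Fin 2 → ℤ) 1 = y 1 + 1 := by simp [chi]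
          exact ih x hx _ h1 u hu (by omega) h0 (by omega)

/-- M2. -/
lemma em2 (hM : MnConvexSet S) : ∀ N : ℕ, ∀ x ∈ S, ∀ y ∈ S, ∀ u ∈ S,
    (y 1 + 1 - x 1).toNat ≤ N → u 1 < x 1 → y 0 + y 1 < x 0 + x 1 →
    x - Pi.single 1 1 ∈ S := by
  intro N
  induction N with
  | zero =>
    intro x hx y hy u hu hN h0 hs
    exact down1 hM _ x hx y hy le_rfl (by omega) hs
  | succ N ih =>
    intro x hx y hy u hu hN h0 hs
    by_cases hc : y 1 < x 1
    · exact down1 hM _ x hx y hy le_rfl hc hs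
    · obtain ⟨j, hj, h1, h2⟩ := hM y hy u hu 1 (by omega)
      obtain _ | j := j
      · have hy' : y - Pi.single 1 1 ∈ S := mem_congr h1 (by simp [chi]) (by simp [chi])
        have c0 : (y - Pi.single 1 1 : Fin 2 → ℤ) 0 = y 0 := by simp
        have c1 : (y - Pi.single 1 1 : Fin 2 → ℤ) 1 = y 1 - 1 := by simp
        exact ih x hx _ hy' u hu (by omega) h0 (by omega)
      · have hj01 : j = 0 ∨ j = 1 := by omega
        rcases hj01 with rfl | rfl
        · have c0 : (y - Pi.single 1 1 + chi (some 0) : Fin 2 → ℤ) 0 = y 0 + 1 := by simp [chi]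
          have c1 : (y - Pi.single 1 1 + chi (some 0) : Fin 2 → ℤ) 1 = y 1 - 1 := by simp [chi]
          exact ih x hx _ h1 u hu (by omega) h0 (by omega)
        · have := hj _ rfl; omega

/-- M1⁻. -/
lemma em1u (hM : MnConvexSet S) : ∀ N : ℕ, ∀ x ∈ S, ∀ y ∈ S, ∀ u ∈ S,
    (x 0 + 1 - y 0).toNat ≤ N → x 0 < u 0 → x 0 + x 1 < y 0 + y 1 →
    x + Pi.single 0 1 ∈ S := by
  intro N
  induction N with
  | zero =>
    intro x hx y hy u hu hN h0 hs
    exact up0 hM _ x hx y hy le_rfl (by omega) hs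
  | succ N ih =>
    intro x hx y hy u hu hN h0 hs
    by_cases hc : x 0 < y 0
    · exact up0 hM _ x hx y hy le_rfl hc hs
    · obtain ⟨j, hj, h1, h2⟩ := hM u hu y hy 0 (by omega)
      obtain _ | j := j
      · have hy' : y + Pi.single 0 1 ∈ S := mem_congr h2 (by simp [chi]) (by simp [chi])
        have c0 : (y + Pi.single 0 1 : Fin 2 → ℤ) 0 = y 0 + 1 := by simp
        have c1 : (y + Pi.single 0 1 : Fin 2 → ℤ) 1 = y 1 := by simp
        exact ih x hx _ hy' u hu (by omega) h0 (by omega)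
      · have hj01 : j = 0 ∨ j = 1 := by omega
        rcases hj01 with rfl | rfl
        · have := hj _ rfl; omega
        · have c0 : (y + Pi.single 0 1 - chi (some 1) : Fin 2 → ℤ) 0 = y 0 + 1 := by simp [chi]
          have c1 : (y + Pi.single 0 1 - chi (some 1) : Fin 2 → ℤ) 1 = y 1 - 1 := by simp [chi]
          exact ih x hx _ h2 u hu (by omega) h0 (by omega)

/-- M2⁻. -/
lemma em2u (hM : MnConvexSet S) : ∀ N : ℕ, ∀ x ∈ S, ∀ y ∈ S, ∀ u ∈ S,
    (x 1 + 1 - y 1).toNat ≤ N → x 1 < u 1 → x 0 + x 1 < y 0 + y 1 →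
    x + Pi.single 1 1 ∈ S := by
  intro N
  induction N with
  | zero =>
    intro x hx y hy u hu hN h0 hs
    exact up1 hM _ x hx y hy le_rfl (by omega) hs
  | succ N ih =>
    intro x hx y hy u hu hN h0 hs
    by_cases hc : x 1 < y 1
    · exact up1 hM _ x hx y hy le_rfl hc hs
    · obtain ⟨j, hj, h1, h2⟩ := hM u hu y hy 1 (by omega)
      obtain _ | j := j
      · have hy' : y + Pi.single 1 1 ∈ S := mem_congr h2 (by simp [chi]) (by simp [chi])
        have c0 : (y + Pi.single 1 1 : Fin 2 → ℤ) 0 = y 0 := by simp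
        have c1 : (y + Pi.single 1 1 : Fin 2 → ℤ) 1 = y 1 + 1 := by simp
        exact ih x hx _ hy' u hu (by omega) h0 (by omega)
      · have hj01 : j = 0 ∨ j = 1 := by omega
        rcases hj01 with rfl | rfl
        · have c0 : (y + Pi.single 1 1 - chi (some 0) : Fin 2 → ℤ) 0 = y 0 - 1 := by simp [chi]
          have c1 : (y + Pi.single 1 1 - chi (some 0) : Fin 2 → ℤ) 1 = y 1 + 1 := by simp [chi]
          exact ih x hx _ h2 u hu (by omega) h0 (by omega)
        · have := hj _ rfl; omega

/-- M3: witnesses `u 0 < x 0`, `u 1 ≤ x 1`, `x 1 < w 1` give `x - χ₀ + χ₁ ∈ S`. -/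
lemma em3aux (hM : MnConvexSet S) : ∀ N : ℕ, ∀ x ∈ S, ∀ w ∈ S, ∀ u ∈ S,
    (w 0 + 1 - x 0).toNat ≤ N → u 0 < x 0 → u 1 ≤ x 1 → x 1 < w 1 →
    x - Pi.single 0 1 + Pi.single 1 1 ∈ S := by
  intro N
  induction N with
  | zero =>
    intro x hx w hw u hu hN h0 h1 h2
    exact swap01 hM hx hw (by omega) h2
  | succ N ih =>
    intro x hx w hw u hu hN h0 h1 h2
    by_cases hc : w 0 < x 0
    · exact swap01 hM hx hw hc h2
    · obtain ⟨j, hj, ha, hb⟩ := hM w hw u hu 0 (by omega)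
      obtain _ | j := j
      · have hw' : w - Pi.single 0 1 ∈ S := mem_congr ha (by simp [chi]) (by simp [chi])
        have c0 : (w - Pi.single 0 1 : Fin 2 → ℤ) 0 = w 0 - 1 := by simp
        have c1 : (w - Pi.single 0 1 : Fin 2 → ℤ) 1 = w 1 := by simp
        exact ih x hx _ hw' u hu (by omega) h0 h1 (by omega)
      · have hj01 : j = 0 ∨ j = 1 := by omega
        rcases hj01 with rfl | rfl
        · have := hj _ rfl; omega
        · have := hj _ rfl; omega

lemma em3 (hM : MnConvexSet S) {x w u : Fin 2 → ℤ} (hx : x ∈ S) (hw : w ∈ S) (hu : u ∈ S)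
    (h0 : u 0 < x 0) (h2 : x 1 < w 1) :
    x - Pi.single 0 1 + Pi.single 1 1 ∈ S := by
  by_cases h1 : x 1 < u 1
  · exact swap01 hM hx hu h0 h1
  · exact em3aux hM _ x hx w hw u hu le_rfl h0 (by omega) h2

/-- M3'. -/
lemma em3aux' (hM : MnConvexSet S) : ∀ N : ℕ, ∀ x ∈ S, ∀ w ∈ S, ∀ u ∈ S,
    (w 1 + 1 - x 1).toNat ≤ N → u 1 < x 1 → u 0 ≤ x 0 → x 0 < w 0 →
    x - Pi.single 1 1 + Pi.single 0 1 ∈ S := by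
  intro N
  induction N with
  | zero =>
    intro x hx w hw u hu hN h0 h1 h2
    exact swap10 hM hx hw (by omega) h2
  | succ N ih =>
    intro x hx w hw u hu hN h0 h1 h2
    by_cases hc : w 1 < x 1
    · exact swap10 hM hx hw hc h2
    · obtain ⟨j, hj, ha, hb⟩ := hM w hw u hu 1 (by omega)
      obtain _ | j := j
      · have hw' : w - Pi.single 1 1 ∈ S := mem_congr ha (by simp [chi]) (by simp [chi])
        have c0 : (w - Pi.single 1 1 : Fin 2 → ℤ) 0 = w 0 := by simp
        have c1 : (w - Pi.single 1 1 : Fin 2 → ℤ) 1 = w 1 - 1 := by simp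
        exact ih x hx _ hw' u hu (by omega) h0 h1 (by omega)
      · have hj01 : j = 0 ∨ j = 1 := by omega
        rcases hj01 with rfl | rfl
        · have := hj _ rfl; omega
        · have := hj _ rfl; omega

lemma em3' (hM : MnConvexSet S) {x w u : Fin 2 → ℤ} (hx : x ∈ S) (hw : w ∈ S) (hu : u ∈ S)
    (h0 : u 1 < x 1) (h2 : x 0 < w 0) :
    x - Pi.single 1 1 + Pi.single 0 1 ∈ S := by
  by_cases h1 : x 0 < u 0
  · exact swap10 hM hx hu h0 h1
  · exact em3aux' hM _ x hx w hw u hu le_rfl h0 (by omega) h2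

/-- Hexagonal distance to `z`. -/
def Dz (z x : Fin 2 → ℤ) : ℕ :=
  (x 0 - z 0).natAbs + (x 1 - z 1).natAbs + (x 0 + x 1 - (z 0 + z 1)).natAbs

lemma descent (hM : MnConvexSet S) (z : Fin 2 → ℤ)
    (w1l : ∃ u ∈ S, u 0 ≤ z 0) (w1u : ∃ u ∈ S, z 0 ≤ u 0)
    (w2l : ∃ u ∈ S, u 1 ≤ z 1) (w2u : ∃ u ∈ S, z 1 ≤ u 1)
    (w0l : ∃ u ∈ S, u 0 + u 1 ≤ z 0 + z 1) (w0u : ∃ u ∈ S, z 0 + z 1 ≤ u 0 + u 1) :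
    ∀ x ∈ S, x ≠ z → ∃ x' ∈ S, Dz z x' < Dz z x := by
  intro x hx hne
  have hne2 : x 0 ≠ z 0 ∨ x 1 ≠ z 1 := by
    by_contra h
    push_neg at h
    exact hne (funext fun k => by
      have : k = 0 ∨ k = 1 := by omega
      rcases this with rfl | rfl
      · exact h.1
      · exact h.2)
  have hcase : (z 0 < x 0 ∧ z 0 + z 1 < x 0 + x 1) ∨ (z 1 < x 1 ∧ z 0 + z 1 < x 0 + x 1) ∨
      (x 0 < z 0 ∧ x 0 + x 1 < z 0 + z 1) ∨ (x 1 < z 1 ∧ x 0 + x 1 < z 0 + z 1) ∨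
      (z 0 < x 0 ∧ x 1 < z 1) ∨ (x 0 < z 0 ∧ z 1 < x 1) := by
    rcases hne2 with h | h <;> omega
  rcases hcase with ⟨h, h'⟩ | ⟨h, h'⟩ | ⟨h, h'⟩ | ⟨h, h'⟩ | ⟨h, h'⟩ | ⟨h, h'⟩
  · obtain ⟨u, hu, hu0⟩ := w1l
    obtain ⟨y, hy, hy0⟩ := w0l
    refine ⟨_, em1 hM _ x hx y hy u hu le_rfl (by omega) (by omega), ?_⟩
    have c0 : (x - Pi.single 0 1 : Fin 2 → ℤ) 0 = x 0 - 1 := by simp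
    have c1 : (x - Pi.single 0 1 : Fin 2 → ℤ) 1 = x 1 := by simp
    simp only [Dz, c0, c1]; omega
  · obtain ⟨u, hu, hu0⟩ := w2l
    obtain ⟨y, hy, hy0⟩ := w0l
    refine ⟨_, em2 hM _ x hx y hy u hu le_rfl (by omega) (by omega), ?_⟩
    have c0 : (x - Pi.single 1 1 : Fin 2 → ℤ) 0 = x 0 := by simp
    have c1 : (x - Pi.single 1 1 : Fin 2 → ℤ) 1 = x 1 - 1 := by simp
    simp only [Dz, c0, c1]; omega
  · obtain ⟨u, hu, hu0⟩ := w1u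
    obtain ⟨y, hy, hy0⟩ := w0u
    refine ⟨_, em1u hM _ x hx y hy u hu le_rfl (by omega) (by omega), ?_⟩
    have c0 : (x + Pi.single 0 1 : Fin 2 → ℤ) 0 = x 0 + 1 := by simp
    have c1 : (x + Pi.single 0 1 : Fin 2 → ℤ) 1 = x 1 := by simp
    simp only [Dz, c0, c1]; omega
  · obtain ⟨u, hu, hu0⟩ := w2u
    obtain ⟨y, hy, hy0⟩ := w0u
    refine ⟨_, em2u hM _ x hx y hy u hu le_rfl (by omega) (by omega), ?_⟩
    have c0 : (x + Pi.single 1 1 : Fin 2 → ℤ) 0 = x 0 := by simp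
    have c1 : (x + Pi.single 1 1 : Fin 2 → ℤ) 1 = x 1 + 1 := by simp
    simp only [Dz, c0, c1]; omega
  · obtain ⟨u, hu, hu0⟩ := w1l
    obtain ⟨w, hw, hw1⟩ := w2u
    refine ⟨_, em3 hM hx hw hu (by omega) (by omega), ?_⟩
    have c0 : (x - Pi.single 0 1 + Pi.single 1 1 : Fin 2 → ℤ) 0 = x 0 - 1 := by simp
    have c1 : (x - Pi.single 0 1 + Pi.single 1 1 : Fin 2 → ℤ) 1 = x 1 + 1 := by simp
    simp only [Dz, c0, c1]; omega
  · obtain ⟨u, hu, hu0⟩ := w2l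
    obtain ⟨w, hw, hw1⟩ := w1u
    refine ⟨_, em3' hM hx hw hu (by omega) (by omega), ?_⟩
    have c0 : (x - Pi.single 1 1 + Pi.single 0 1 : Fin 2 → ℤ) 0 = x 0 + 1 := by simp
    have c1 : (x - Pi.single 1 1 + Pi.single 0 1 : Fin 2 → ℤ) 1 = x 1 - 1 := by simp
    simp only [Dz, c0, c1]; omega

lemma hexLemma (hM : MnConvexSet S) (z : Fin 2 → ℤ)
    (w1l : ∃ u ∈ S, u 0 ≤ z 0) (w1u : ∃ u ∈ S, z 0 ≤ u 0)
    (w2l : ∃ u ∈ S, u 1 ≤ z 1) (w2u : ∃ u ∈ S, z 1 ≤ u 1)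
    (w0l : ∃ u ∈ S, u 0 + u 1 ≤ z 0 + z 1) (w0u : ∃ u ∈ S, z 0 + z 1 ≤ u 0 + u 1) :
    z ∈ S := by
  have main : ∀ n : ℕ, ∀ x ∈ S, Dz z x ≤ n → z ∈ S := by
    intro n
    induction n with
    | zero =>
      intro x hx hD
      have h1 : x 0 = z 0 ∧ x 1 = z 1 := by
        simp only [Dz] at hD; omega
      have : x = z := funext fun k => by
        have : k = 0 ∨ k = 1 := by omega
        rcases this with rfl | rfl
        · exact h1.1
        · exact h1.2
      exact this ▸ hx
    | succ n ih =>
      intro x hx hD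
      by_cases hxz : x = z
      · exact hxz ▸ hx
      · obtain ⟨x', hx', hlt⟩ := descent hM z w1l w1u w2l w2u w0l w0u x hx hxz
        exact ih x' hx' (by omega)
  obtain ⟨x, hx, _⟩ := w1l
  exact main (Dz z x) x hx le_rfl

/-- Linear bounds on the convex hull. -/
lemma exists_le (hne : S.Nonempty) (hbd : BoundedSet S) (c0 c1 : ℤ) (z : Fin 2 → ℤ)
    (hz : toR z ∈ convexHull ℝ (toR '' S)) :
    ∃ u ∈ S, c0 * u 0 + c1 * u 1 ≤ c0 * z 0 + c1 * z 1 := by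
  obtain ⟨M, hb⟩ := hbd
  set F : (Fin 2 → ℤ) → ℤ := fun x => c0 * x 0 + c1 * x 1 with hF
  have hbdd : BddBelow (F '' S) := by
    refine ⟨-(|c0| * M + |c1| * M), ?_⟩
    rintro t ⟨x, hx, rfl⟩
    have h := hb x hx
    have e0 : |c0 * x 0| ≤ |c0| * M := by
      rw [abs_mul]; exact mul_le_mul_of_nonneg_left h.1 (abs_nonneg c0)
    have e1 : |c1 * x 1| ≤ |c1| * M := by
      rw [abs_mul]; exact mul_le_mul_of_nonneg_left h.2 (abs_nonneg c1)
    have n0 := neg_abs_le (c0 * x 0)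
    have n1 := neg_abs_le (c1 * x 1)
    simp only [F]
    linarith
  have hmem := Int.csInf_mem (hne.image F) hbdd
  obtain ⟨u, hu, hus⟩ := hmem
  have hconv : convexHull ℝ (toR '' S) ⊆
      {p : Fin 2 → ℝ | (↑(sInf (F '' S)) : ℝ) ≤ (c0 : ℝ) * p 0 + (c1 : ℝ) * p 1} := by
    apply convexHull_min
    · rintro _ ⟨x, hx, rfl⟩
      have h : sInf (F '' S) ≤ F x := csInf_le hbdd ⟨x, hx, rfl⟩
      simp only [Set.mem_setOf_eq, toR]
      have h' : (↑(F x) : ℝ) = (c0 : ℝ) * (x 0 : ℝ) + (c1 : ℝ) * (x 1 : ℝ) := by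
        simp only [hF]; push_cast; ring
      calc (↑(sInf (F '' S)) : ℝ) ≤ (↑(F x) : ℝ) := by exact_mod_cast h
        _ = _ := h'
    · exact convex_halfSpace_ge
        ⟨fun a b => by simp; ring, fun c a => by simp [Pi.smul_apply, smul_eq_mul]; ring⟩ _
  have hzb := hconv hz
  simp only [Set.mem_setOf_eq, toR] at hzb
  have hzb' : sInf (F '' S) ≤ c0 * z 0 + c1 * z 1 := by exact_mod_cast hzb
  exact ⟨u, hu, le_trans (le_of_eq hus) hzb'⟩

lemma exists_ge (hne : S.Nonempty) (hbd : BoundedSet S) (c0 c1 : ℤ) (z : Fin 2 → ℤ)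
    (hz : toR z ∈ convexHull ℝ (toR '' S)) :
    ∃ u ∈ S, c0 * z 0 + c1 * z 1 ≤ c0 * u 0 + c1 * u 1 := by
  obtain ⟨M, hb⟩ := hbd
  set F : (Fin 2 → ℤ) → ℤ := fun x => c0 * x 0 + c1 * x 1 with hF
  have hbdd : BddAbove (F '' S) := by
    refine ⟨|c0| * M + |c1| * M, ?_⟩
    rintro t ⟨x, hx, rfl⟩
    have h := hb x hx
    have e0 : |c0 * x 0| ≤ |c0| * M := by
      rw [abs_mul]; exact mul_le_mul_of_nonneg_left h.1 (abs_nonneg c0)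
    have e1 : |c1 * x 1| ≤ |c1| * M := by
      rw [abs_mul]; exact mul_le_mul_of_nonneg_left h.2 (abs_nonneg c1)
    have n0 := le_abs_self (c0 * x 0)
    have n1 := le_abs_self (c1 * x 1)
    simp only [F]
    linarith
  have hmem := Int.csSup_mem (hne.image F) hbdd
  obtain ⟨u, hu, hus⟩ := hmem
  have hconv : convexHull ℝ (toR '' S) ⊆
      {p : Fin 2 → ℝ | (c0 : ℝ) * p 0 + (c1 : ℝ) * p 1 ≤ (↑(sSup (F '' S)) : ℝ)} := by
    apply convexHull_min
    · rintro _ ⟨x, hx, rfl⟩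
      have h : F x ≤ sSup (F '' S) := le_csSup hbdd ⟨x, hx, rfl⟩
      simp only [Set.mem_setOf_eq, toR]
      have h' : (↑(F x) : ℝ) = (c0 : ℝ) * (x 0 : ℝ) + (c1 : ℝ) * (x 1 : ℝ) := by
        simp only [hF]; push_cast; ring
      calc (c0 : ℝ) * (x 0 : ℝ) + (c1 : ℝ) * (x 1 : ℝ) = (↑(F x) : ℝ) := h'.symm
        _ ≤ _ := by exact_mod_cast h
    · exact convex_halfSpace_le
        ⟨fun a b => by simp; ring, fun c a => by simp [Pi.smul_apply, smul_eq_mul]; ring⟩ _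
  have hzb := hconv hz
  simp only [Set.mem_setOf_eq, toR] at hzb
  have hzb' : c0 * z 0 + c1 * z 1 ≤ sSup (F '' S) := by exact_mod_cast hzb
  exact ⟨u, hu, le_trans hzb' (le_of_eq hus.symm)⟩

end Stmt2Aux

theorem stmt2 (S : Set (Fin 2 → ℤ)) (hne : S.Nonempty) (hbd : BoundedSet S)
    (hM : MnConvexSet S) :
    {x : Fin 2 → ℤ | toR x ∈ convexHull ℝ (toR '' S)} = S := by
  ext z
  simp only [Set.mem_setOf_eq]
  constructor
  · intro hz
    have w1l : ∃ u ∈ S, u 0 ≤ z 0 := by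
      obtain ⟨u, hu, h⟩ := Stmt2Aux.exists_le hne hbd 1 0 z hz
      exact ⟨u, hu, by omega⟩
    have w1u : ∃ u ∈ S, z 0 ≤ u 0 := by
      obtain ⟨u, hu, h⟩ := Stmt2Aux.exists_ge hne hbd 1 0 z hz
      exact ⟨u, hu, by omega⟩
    have w2l : ∃ u ∈ S, u 1 ≤ z 1 := by
      obtain ⟨u, hu, h⟩ := Stmt2Aux.exists_le hne hbd 0 1 z hz
      exact ⟨u, hu, by omega⟩
    have w2u : ∃ u ∈ S, z 1 ≤ u 1 := by
      obtain ⟨u, hu, h⟩ := Stmt2Aux.exists_ge hne hbd 0 1 z hz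
      exact ⟨u, hu, by omega⟩
    have w0l : ∃ u ∈ S, u 0 + u 1 ≤ z 0 + z 1 := by
      obtain ⟨u, hu, h⟩ := Stmt2Aux.exists_le hne hbd 1 1 z hz
      exact ⟨u, hu, by omega⟩
    have w0u : ∃ u ∈ S, z 0 + z 1 ≤ u 0 + u 1 := by
      obtain ⟨u, hu, h⟩ := Stmt2Aux.exists_ge hne hbd 1 1 z hz
      exact ⟨u, hu, by omega⟩
    exact Stmt2Aux.hexLemma hM z w1l w1u w2l w2u w0l w0u
  · intro hz
    exact subset_convexHull ℝ _ ⟨z, hz, rfl⟩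
end

section
/- Let S ⊆ ℤ² be a nonempty bounded M♮-convex set, and let λ₁ = min_{x∈S} x¹, μ₁ = max_{x∈S} x¹, λ₂ = min_{x∈S} x², μ₂ = max_{x∈S} x², λ₀ = min_{x∈S} (x¹+x²), μ₀ = max_{x∈S} (x¹+x²). Then conv(S), the convex hull of S in ℝ², is equal to the convex hull of the six points (λ₁, μ₂), (μ₀ − μ₂, μ₂), (μ₁, μ₀ − μ₁), (μ₁, λ₂), (λ₀ − λ₂, λ₂), (λ₁, λ₀ − λ₁). -/
open Finset

lemma aux_bdds (S : Set (Fin 2 → ℤ)) (hbd : BoundedSet S) :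
    BddBelow ((fun x => x 0) '' S) ∧ BddAbove ((fun x => x 0) '' S) ∧
    BddBelow ((fun x => x 1) '' S) ∧ BddAbove ((fun x => x 1) '' S) ∧
    BddBelow ((fun x => x 0 + x 1) '' S) ∧ BddAbove ((fun x => x 0 + x 1) '' S) := by
  obtain ⟨M, hM⟩ := hbd
  refine ⟨⟨-M, fun t ht => ?_⟩, ⟨M, fun t ht => ?_⟩, ⟨-M, fun t ht => ?_⟩,
    ⟨M, fun t ht => ?_⟩, ⟨-(2*M), fun t ht => ?_⟩, ⟨2*M, fun t ht => ?_⟩⟩ <;>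
  · obtain ⟨x, hx, rfl⟩ := ht
    obtain ⟨h0, h1⟩ := hM x hx
    rw [abs_le] at h0 h1
    simp only
    omega

lemma aux_coeff (s b d : ℝ) (h1 : s ≤ b) (h2 : b ≤ d) :
    ∃ a₁ a₂ : ℝ, 0 ≤ a₁ ∧ 0 ≤ a₂ ∧ a₁ + a₂ = 1 ∧ b = a₁ * s + a₂ * d := by
  rcases eq_or_lt_of_le (h1.trans h2) with h | h
  · exact ⟨1, 0, zero_le_one, le_refl 0, by norm_num, by nlinarith⟩
  · have hds : d - s ≠ 0 := ne_of_gt (by linarith)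
    refine ⟨(d - b) / (d - s), (b - s) / (d - s),
      div_nonneg (by linarith) (by linarith), div_nonneg (by linarith) (by linarith), ?_, ?_⟩
    · field_simp
      ring
    · field_simp
      ring

lemma aux_between {V : Set (Fin 2 → ℝ)} {u v z : Fin 2 → ℝ}
    (hu : u ∈ convexHull ℝ V) (hv : v ∈ convexHull ℝ V)
    (a b : ℝ) (ha : 0 ≤ a) (hb : 0 ≤ b) (hab : a + b = 1)
    (h0 : z 0 = a * u 0 + b * v 0) (h1 : z 1 = a * u 1 + b * v 1) :
    z ∈ convexHull ℝ V := by
  have hz : a • u + b • v = z := by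
    funext j
    fin_cases j
    · simpa using h0.symm
    · simpa using h1.symm
  exact (convex_convexHull ℝ V).segment_subset hu hv ⟨a, b, ha, hb, hab, hz⟩

lemma exists_v1 (S : Set (Fin 2 → ℤ)) (hne : S.Nonempty) (hbd : BoundedSet S)
    (hM : MnConvexSet S) : ∃ x ∈ S, x 0 = lam1 S ∧ x 1 = mu2 S := by
  obtain ⟨bb0, ba0, bb1, ba1, bbs, bas⟩ := aux_bdds S hbd
  obtain ⟨M, hMb⟩ := hbd
  have hl1 : ∀ z ∈ S, lam1 S ≤ z 0 := fun z hz => csInf_le bb0 ⟨z, hz, rfl⟩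
  have hm2 : ∀ z ∈ S, z 1 ≤ mu2 S := fun z hz => le_csSup ba1 ⟨z, hz, rfl⟩
  obtain ⟨x0, hx0S, hx0e⟩ := Int.csInf_mem (hne.image (fun x => x 0)) bb0
  have hAne : ({t | ∃ z ∈ S, z 0 = lam1 S ∧ z 1 = t} : Set ℤ).Nonempty :=
    ⟨x0 1, x0, hx0S, hx0e, rfl⟩
  have hAbd : BddAbove ({t | ∃ z ∈ S, z 0 = lam1 S ∧ z 1 = t} : Set ℤ) :=
    ⟨M, by rintro t ⟨z, hz, _, rfl⟩; exact (abs_le.mp (hMb z hz).2).2⟩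
  obtain ⟨x, hx, hx0, hx1⟩ := Int.csSup_mem hAne hAbd
  refine ⟨x, hx, hx0, ?_⟩
  by_contra hne2
  have hle := hm2 x hx
  have hlt : x 1 < mu2 S := lt_of_le_of_ne hle hne2
  obtain ⟨y, hyS, hy1⟩ := Int.csSup_mem (hne.image (fun x => x 1)) ba1
  have hy1' : y 1 = mu2 S := hy1
  have hxy : x 1 < y 1 := by linarith
  obtain ⟨j, hj, _, hj2⟩ := hM y hyS x hx 1 hxy
  rcases j with _ | j
  · have hmem : x + Pi.single 1 1 ∈ S := by simpa [chi] using hj2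
    have h0 : ((x + Pi.single 1 1 : Fin 2 → ℤ)) 0 = lam1 S := by
      simp [Pi.single_apply, hx0]
    have h1 : ((x + Pi.single 1 1 : Fin 2 → ℤ)) 1 = x 1 + 1 := by
      simp [Pi.single_apply]
    have : x 1 + 1 ≤ sSup ({t | ∃ z ∈ S, z 0 = lam1 S ∧ z 1 = t} : Set ℤ) :=
      le_csSup hAbd ⟨_, hmem, h0, h1⟩
    linarith
  · fin_cases j
    · have h := hj 0 rfl
      have := hl1 y hyS
      linarith
    · have h := hj 1 rfl
      linarith

lemma exists_v4 (S : Set (Fin 2 → ℤ)) (hne : S.Nonempty) (hbd : BoundedSet S)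
    (hM : MnConvexSet S) : ∃ x ∈ S, x 0 = mu1 S ∧ x 1 = lam2 S := by
  obtain ⟨bb0, ba0, bb1, ba1, bbs, bas⟩ := aux_bdds S hbd
  obtain ⟨M, hMb⟩ := hbd
  have hm1 : ∀ z ∈ S, z 0 ≤ mu1 S := fun z hz => le_csSup ba0 ⟨z, hz, rfl⟩
  have hl2 : ∀ z ∈ S, lam2 S ≤ z 1 := fun z hz => csInf_le bb1 ⟨z, hz, rfl⟩
  obtain ⟨x0, hx0S, hx0e⟩ := Int.csSup_mem (hne.image (fun x => x 0)) ba0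
  have hAne : ({t | ∃ z ∈ S, z 0 = mu1 S ∧ z 1 = t} : Set ℤ).Nonempty :=
    ⟨x0 1, x0, hx0S, hx0e, rfl⟩
  have hAbd : BddBelow ({t | ∃ z ∈ S, z 0 = mu1 S ∧ z 1 = t} : Set ℤ) :=
    ⟨-M, by rintro t ⟨z, hz, _, rfl⟩; exact (abs_le.mp (hMb z hz).2).1⟩
  obtain ⟨x, hx, hx0, hx1⟩ := Int.csInf_mem hAne hAbd
  refine ⟨x, hx, hx0, ?_⟩
  by_contra hne2
  have hge := hl2 x hx
  have hlt : lam2 S < x 1 := lt_of_le_of_ne hge (Ne.symm hne2)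
  obtain ⟨y, hyS, hy1⟩ := Int.csInf_mem (hne.image (fun x => x 1)) bb1
  have hy1' : y 1 = lam2 S := hy1
  have hxy : y 1 < x 1 := by linarith
  obtain ⟨j, hj, hj1, _⟩ := hM x hx y hyS 1 hxy
  rcases j with _ | j
  · have hmem : x - Pi.single 1 1 ∈ S := by simpa [chi] using hj1
    have h0 : ((x - Pi.single 1 1 : Fin 2 → ℤ)) 0 = mu1 S := by
      simp [Pi.single_apply, hx0]
    have h1 : ((x - Pi.single 1 1 : Fin 2 → ℤ)) 1 = x 1 - 1 := by
      simp [Pi.single_apply]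
    have : sInf ({t | ∃ z ∈ S, z 0 = mu1 S ∧ z 1 = t} : Set ℤ) ≤ x 1 - 1 :=
      csInf_le hAbd ⟨_, hmem, h0, h1⟩
    linarith
  · fin_cases j
    · have h := hj 0 rfl
      have := hm1 y hyS
      linarith
    · have h := hj 1 rfl
      linarith

lemma exists_v2 (S : Set (Fin 2 → ℤ)) (hne : S.Nonempty) (hbd : BoundedSet S)
    (hM : MnConvexSet S) : ∃ x ∈ S, x 0 + x 1 = mu0 S ∧ x 1 = mu2 S := by
  obtain ⟨bb0, ba0, bb1, ba1, bbs, bas⟩ := aux_bdds S hbd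
  obtain ⟨M, hMb⟩ := hbd
  have hm0 : ∀ z ∈ S, z 0 + z 1 ≤ mu0 S := fun z hz => le_csSup bas ⟨z, hz, rfl⟩
  have hm2 : ∀ z ∈ S, z 1 ≤ mu2 S := fun z hz => le_csSup ba1 ⟨z, hz, rfl⟩
  obtain ⟨x0, hx0S, hx0e⟩ := Int.csSup_mem (hne.image (fun x => x 0 + x 1)) bas
  have hAne : ({t | ∃ z ∈ S, z 0 + z 1 = mu0 S ∧ z 1 = t} : Set ℤ).Nonempty :=
    ⟨x0 1, x0, hx0S, hx0e, rfl⟩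
  have hAbd : BddAbove ({t | ∃ z ∈ S, z 0 + z 1 = mu0 S ∧ z 1 = t} : Set ℤ) :=
    ⟨M, by rintro t ⟨z, hz, _, rfl⟩; exact (abs_le.mp (hMb z hz).2).2⟩
  obtain ⟨x, hx, hxs, hx1⟩ := Int.csSup_mem hAne hAbd
  refine ⟨x, hx, hxs, ?_⟩
  by_contra hne2
  have hle := hm2 x hx
  have hlt : x 1 < mu2 S := lt_of_le_of_ne hle hne2
  obtain ⟨y, hyS, hy1⟩ := Int.csSup_mem (hne.image (fun x => x 1)) ba1
  have hy1' : y 1 = mu2 S := hy1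
  have hxy : x 1 < y 1 := by linarith
  obtain ⟨j, hj, _, hj2⟩ := hM y hyS x hx 1 hxy
  rcases j with _ | j
  · have hmem : x + Pi.single 1 1 ∈ S := by simpa [chi] using hj2
    have h2 := hm0 _ hmem
    simp [Pi.single_apply] at h2
    linarith
  · fin_cases j
    · have h := hj 0 rfl
      have hmem : x + Pi.single 1 1 - Pi.single 0 1 ∈ S := by simpa [chi] using hj2
      have h0 : ((x + Pi.single 1 1 - Pi.single 0 1 : Fin 2 → ℤ)) 0 +
          ((x + Pi.single 1 1 - Pi.single 0 1 : Fin 2 → ℤ)) 1 = mu0 S := by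
        simp [Pi.single_apply]
        linarith
      have h1 : ((x + Pi.single 1 1 - Pi.single 0 1 : Fin 2 → ℤ)) 1 = x 1 + 1 := by
        simp [Pi.single_apply]
      have : x 1 + 1 ≤ sSup ({t | ∃ z ∈ S, z 0 + z 1 = mu0 S ∧ z 1 = t} : Set ℤ) :=
        le_csSup hAbd ⟨_, hmem, h0, h1⟩
      linarith
    · have h := hj 1 rfl
      linarith

lemma exists_v3 (S : Set (Fin 2 → ℤ)) (hne : S.Nonempty) (hbd : BoundedSet S)
    (hM : MnConvexSet S) : ∃ x ∈ S, x 0 + x 1 = mu0 S ∧ x 0 = mu1 S := by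
  obtain ⟨bb0, ba0, bb1, ba1, bbs, bas⟩ := aux_bdds S hbd
  obtain ⟨M, hMb⟩ := hbd
  have hm0 : ∀ z ∈ S, z 0 + z 1 ≤ mu0 S := fun z hz => le_csSup bas ⟨z, hz, rfl⟩
  have hm1 : ∀ z ∈ S, z 0 ≤ mu1 S := fun z hz => le_csSup ba0 ⟨z, hz, rfl⟩
  obtain ⟨x0, hx0S, hx0e⟩ := Int.csSup_mem (hne.image (fun x => x 0 + x 1)) bas
  have hAne : ({t | ∃ z ∈ S, z 0 + z 1 = mu0 S ∧ z 0 = t} : Set ℤ).Nonempty :=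
    ⟨x0 0, x0, hx0S, hx0e, rfl⟩
  have hAbd : BddAbove ({t | ∃ z ∈ S, z 0 + z 1 = mu0 S ∧ z 0 = t} : Set ℤ) :=
    ⟨M, by rintro t ⟨z, hz, _, rfl⟩; exact (abs_le.mp (hMb z hz).1).2⟩
  obtain ⟨x, hx, hxs, hx0⟩ := Int.csSup_mem hAne hAbd
  refine ⟨x, hx, hxs, ?_⟩
  by_contra hne2
  have hle := hm1 x hx
  have hlt : x 0 < mu1 S := lt_of_le_of_ne hle hne2
  obtain ⟨y, hyS, hy0⟩ := Int.csSup_mem (hne.image (fun x => x 0)) ba0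
  have hy0' : y 0 = mu1 S := hy0
  have hxy : x 0 < y 0 := by linarith
  obtain ⟨j, hj, _, hj2⟩ := hM y hyS x hx 0 hxy
  rcases j with _ | j
  · have hmem : x + Pi.single 0 1 ∈ S := by simpa [chi] using hj2
    have h2 := hm0 _ hmem
    simp [Pi.single_apply] at h2
    linarith
  · fin_cases j
    · have h := hj 0 rfl
      linarith
    · have h := hj 1 rfl
      have hmem : x + Pi.single 0 1 - Pi.single 1 1 ∈ S := by simpa [chi] using hj2
      have h0 : ((x + Pi.single 0 1 - Pi.single 1 1 : Fin 2 → ℤ)) 0 +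
          ((x + Pi.single 0 1 - Pi.single 1 1 : Fin 2 → ℤ)) 1 = mu0 S := by
        simp [Pi.single_apply]
        linarith
      have h1 : ((x + Pi.single 0 1 - Pi.single 1 1 : Fin 2 → ℤ)) 0 = x 0 + 1 := by
        simp [Pi.single_apply]
      have : x 0 + 1 ≤ sSup ({t | ∃ z ∈ S, z 0 + z 1 = mu0 S ∧ z 0 = t} : Set ℤ) :=
        le_csSup hAbd ⟨_, hmem, h0, h1⟩
      linarith

lemma exists_v5 (S : Set (Fin 2 → ℤ)) (hne : S.Nonempty) (hbd : BoundedSet S)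
    (hM : MnConvexSet S) : ∃ x ∈ S, x 0 + x 1 = lam0 S ∧ x 1 = lam2 S := by
  obtain ⟨bb0, ba0, bb1, ba1, bbs, bas⟩ := aux_bdds S hbd
  obtain ⟨M, hMb⟩ := hbd
  have hl0 : ∀ z ∈ S, lam0 S ≤ z 0 + z 1 := fun z hz => csInf_le bbs ⟨z, hz, rfl⟩
  have hl2 : ∀ z ∈ S, lam2 S ≤ z 1 := fun z hz => csInf_le bb1 ⟨z, hz, rfl⟩
  obtain ⟨x0, hx0S, hx0e⟩ := Int.csInf_mem (hne.image (fun x => x 0 + x 1)) bbs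
  have hAne : ({t | ∃ z ∈ S, z 0 + z 1 = lam0 S ∧ z 1 = t} : Set ℤ).Nonempty :=
    ⟨x0 1, x0, hx0S, hx0e, rfl⟩
  have hAbd : BddBelow ({t | ∃ z ∈ S, z 0 + z 1 = lam0 S ∧ z 1 = t} : Set ℤ) :=
    ⟨-M, by rintro t ⟨z, hz, _, rfl⟩; exact (abs_le.mp (hMb z hz).2).1⟩
  obtain ⟨x, hx, hxs, hx1⟩ := Int.csInf_mem hAne hAbd
  refine ⟨x, hx, hxs, ?_⟩
  by_contra hne2
  have hge := hl2 x hx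
  have hlt : lam2 S < x 1 := lt_of_le_of_ne hge (Ne.symm hne2)
  obtain ⟨y, hyS, hy1⟩ := Int.csInf_mem (hne.image (fun x => x 1)) bb1
  have hy1' : y 1 = lam2 S := hy1
  have hxy : y 1 < x 1 := by linarith
  obtain ⟨j, hj, hj1, _⟩ := hM x hx y hyS 1 hxy
  rcases j with _ | j
  · have hmem : x - Pi.single 1 1 ∈ S := by simpa [chi] using hj1
    have h2 := hl0 _ hmem
    simp [Pi.single_apply] at h2
    linarith
  · fin_cases j
    · have h := hj 0 rfl
      have hmem : x - Pi.single 1 1 + Pi.single 0 1 ∈ S := by simpa [chi] using hj1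
      have h0 : ((x - Pi.single 1 1 + Pi.single 0 1 : Fin 2 → ℤ)) 0 +
          ((x - Pi.single 1 1 + Pi.single 0 1 : Fin 2 → ℤ)) 1 = lam0 S := by
        simp [Pi.single_apply]
        linarith
      have h1 : ((x - Pi.single 1 1 + Pi.single 0 1 : Fin 2 → ℤ)) 1 = x 1 - 1 := by
        simp [Pi.single_apply]
      have : sInf ({t | ∃ z ∈ S, z 0 + z 1 = lam0 S ∧ z 1 = t} : Set ℤ) ≤ x 1 - 1 :=
        csInf_le hAbd ⟨_, hmem, h0, h1⟩
      linarith
    · have h := hj 1 rfl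
      linarith

lemma exists_v6 (S : Set (Fin 2 → ℤ)) (hne : S.Nonempty) (hbd : BoundedSet S)
    (hM : MnConvexSet S) : ∃ x ∈ S, x 0 + x 1 = lam0 S ∧ x 0 = lam1 S := by
  obtain ⟨bb0, ba0, bb1, ba1, bbs, bas⟩ := aux_bdds S hbd
  obtain ⟨M, hMb⟩ := hbd
  have hl0 : ∀ z ∈ S, lam0 S ≤ z 0 + z 1 := fun z hz => csInf_le bbs ⟨z, hz, rfl⟩
  have hl1 : ∀ z ∈ S, lam1 S ≤ z 0 := fun z hz => csInf_le bb0 ⟨z, hz, rfl⟩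
  obtain ⟨x0, hx0S, hx0e⟩ := Int.csInf_mem (hne.image (fun x => x 0 + x 1)) bbs
  have hAne : ({t | ∃ z ∈ S, z 0 + z 1 = lam0 S ∧ z 0 = t} : Set ℤ).Nonempty :=
    ⟨x0 0, x0, hx0S, hx0e, rfl⟩
  have hAbd : BddBelow ({t | ∃ z ∈ S, z 0 + z 1 = lam0 S ∧ z 0 = t} : Set ℤ) :=
    ⟨-M, by rintro t ⟨z, hz, _, rfl⟩; exact (abs_le.mp (hMb z hz).1).1⟩
  obtain ⟨x, hx, hxs, hx0⟩ := Int.csInf_mem hAne hAbd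
  refine ⟨x, hx, hxs, ?_⟩
  by_contra hne2
  have hge := hl1 x hx
  have hlt : lam1 S < x 0 := lt_of_le_of_ne hge (Ne.symm hne2)
  obtain ⟨y, hyS, hy0⟩ := Int.csInf_mem (hne.image (fun x => x 0)) bb0
  have hy0' : y 0 = lam1 S := hy0
  have hxy : y 0 < x 0 := by linarith
  obtain ⟨j, hj, hj1, _⟩ := hM x hx y hyS 0 hxy
  rcases j with _ | j
  · have hmem : x - Pi.single 0 1 ∈ S := by simpa [chi] using hj1
    have h2 := hl0 _ hmem
    simp [Pi.single_apply] at h2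
    linarith
  · fin_cases j
    · have h := hj 0 rfl
      linarith
    · have h := hj 1 rfl
      have hmem : x - Pi.single 0 1 + Pi.single 1 1 ∈ S := by simpa [chi] using hj1
      have h0 : ((x - Pi.single 0 1 + Pi.single 1 1 : Fin 2 → ℤ)) 0 +
          ((x - Pi.single 0 1 + Pi.single 1 1 : Fin 2 → ℤ)) 1 = lam0 S := by
        simp [Pi.single_apply]
        linarith
      have h1 : ((x - Pi.single 0 1 + Pi.single 1 1 : Fin 2 → ℤ)) 0 = x 0 - 1 := by
        simp [Pi.single_apply]
      have : sInf ({t | ∃ z ∈ S, z 0 + z 1 = lam0 S ∧ z 0 = t} : Set ℤ) ≤ x 0 - 1 :=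
        csInf_le hAbd ⟨_, hmem, h0, h1⟩
      linarith


theorem stmt3 (S : Set (Fin 2 → ℤ)) (hne : S.Nonempty) (hbd : BoundedSet S)
    (hM : MnConvexSet S) :
    convexHull ℝ (toR '' S) =
      convexHull ℝ
        ({![(lam1 S : ℝ), (mu2 S : ℝ)],
          ![((mu0 S - mu2 S : ℤ) : ℝ), (mu2 S : ℝ)],
          ![(mu1 S : ℝ), ((mu0 S - mu1 S : ℤ) : ℝ)],
          ![(mu1 S : ℝ), (lam2 S : ℝ)],
          ![((lam0 S - lam2 S : ℤ) : ℝ), (lam2 S : ℝ)],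
          ![(lam1 S : ℝ), ((lam0 S - lam1 S : ℤ) : ℝ)]} : Set (Fin 2 → ℝ)) := by
  
  obtain ⟨bb0, ba0, bb1, ba1, bbs, bas⟩ := aux_bdds S hbd
  apply Set.Subset.antisymm
  · apply convexHull_min ?_ (convex_convexHull ℝ _)
    rintro z ⟨x, hxS, rfl⟩
    have i1 : lam1 S ≤ x 0 := csInf_le bb0 ⟨x, hxS, rfl⟩
    have i2 : x 0 ≤ mu1 S := le_csSup ba0 ⟨x, hxS, rfl⟩
    have i3 : lam2 S ≤ x 1 := csInf_le bb1 ⟨x, hxS, rfl⟩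
    have i4 : x 1 ≤ mu2 S := le_csSup ba1 ⟨x, hxS, rfl⟩
    have i5 : lam0 S ≤ x 0 + x 1 := csInf_le bbs ⟨x, hxS, rfl⟩
    have i6 : x 0 + x 1 ≤ mu0 S := le_csSup bas ⟨x, hxS, rfl⟩
    have r1 : ((lam1 S : ℤ) : ℝ) ≤ ((x 0 : ℤ) : ℝ) := by exact_mod_cast i1
    have r2 : ((x 0 : ℤ) : ℝ) ≤ ((mu1 S : ℤ) : ℝ) := by exact_mod_cast i2
    have r3 : ((lam2 S : ℤ) : ℝ) ≤ ((x 1 : ℤ) : ℝ) := by exact_mod_cast i3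
    have r4 : ((x 1 : ℤ) : ℝ) ≤ ((mu2 S : ℤ) : ℝ) := by exact_mod_cast i4
    have r5 : ((lam0 S : ℤ) : ℝ) ≤ ((x 0 : ℤ) : ℝ) + ((x 1 : ℤ) : ℝ) := by exact_mod_cast i5
    have r6 : ((x 0 : ℤ) : ℝ) + ((x 1 : ℤ) : ℝ) ≤ ((mu0 S : ℤ) : ℝ) := by exact_mod_cast i6
    have hv1 : ![(lam1 S : ℝ), (mu2 S : ℝ)] ∈ convexHull ℝ ({![(lam1 S : ℝ), (mu2 S : ℝ)],
          ![((mu0 S - mu2 S : ℤ) : ℝ), (mu2 S : ℝ)],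
          ![(mu1 S : ℝ), ((mu0 S - mu1 S : ℤ) : ℝ)],
          ![(mu1 S : ℝ), (lam2 S : ℝ)],
          ![((lam0 S - lam2 S : ℤ) : ℝ), (lam2 S : ℝ)],
          ![(lam1 S : ℝ), ((lam0 S - lam1 S : ℤ) : ℝ)]} : Set (Fin 2 → ℝ)) := subset_convexHull ℝ _ (by simp)
    have hv2 : ![((mu0 S - mu2 S : ℤ) : ℝ), (mu2 S : ℝ)] ∈ convexHull ℝ ({![(lam1 S : ℝ), (mu2 S : ℝ)],
          ![((mu0 S - mu2 S : ℤ) : ℝ), (mu2 S : ℝ)],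
          ![(mu1 S : ℝ), ((mu0 S - mu1 S : ℤ) : ℝ)],
          ![(mu1 S : ℝ), (lam2 S : ℝ)],
          ![((lam0 S - lam2 S : ℤ) : ℝ), (lam2 S : ℝ)],
          ![(lam1 S : ℝ), ((lam0 S - lam1 S : ℤ) : ℝ)]} : Set (Fin 2 → ℝ)) := subset_convexHull ℝ _ (by simp)
    have hv3 : ![(mu1 S : ℝ), ((mu0 S - mu1 S : ℤ) : ℝ)] ∈ convexHull ℝ ({![(lam1 S : ℝ), (mu2 S : ℝ)],
          ![((mu0 S - mu2 S : ℤ) : ℝ), (mu2 S : ℝ)],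
          ![(mu1 S : ℝ), ((mu0 S - mu1 S : ℤ) : ℝ)],
          ![(mu1 S : ℝ), (lam2 S : ℝ)],
          ![((lam0 S - lam2 S : ℤ) : ℝ), (lam2 S : ℝ)],
          ![(lam1 S : ℝ), ((lam0 S - lam1 S : ℤ) : ℝ)]} : Set (Fin 2 → ℝ)) := subset_convexHull ℝ _ (by simp)
    have hv4 : ![(mu1 S : ℝ), (lam2 S : ℝ)] ∈ convexHull ℝ ({![(lam1 S : ℝ), (mu2 S : ℝ)],
          ![((mu0 S - mu2 S : ℤ) : ℝ), (mu2 S : ℝ)],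
          ![(mu1 S : ℝ), ((mu0 S - mu1 S : ℤ) : ℝ)],
          ![(mu1 S : ℝ), (lam2 S : ℝ)],
          ![((lam0 S - lam2 S : ℤ) : ℝ), (lam2 S : ℝ)],
          ![(lam1 S : ℝ), ((lam0 S - lam1 S : ℤ) : ℝ)]} : Set (Fin 2 → ℝ)) := subset_convexHull ℝ _ (by simp)
    have hv5 : ![((lam0 S - lam2 S : ℤ) : ℝ), (lam2 S : ℝ)] ∈ convexHull ℝ ({![(lam1 S : ℝ), (mu2 S : ℝ)],
          ![((mu0 S - mu2 S : ℤ) : ℝ), (mu2 S : ℝ)],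
          ![(mu1 S : ℝ), ((mu0 S - mu1 S : ℤ) : ℝ)],
          ![(mu1 S : ℝ), (lam2 S : ℝ)],
          ![((lam0 S - lam2 S : ℤ) : ℝ), (lam2 S : ℝ)],
          ![(lam1 S : ℝ), ((lam0 S - lam1 S : ℤ) : ℝ)]} : Set (Fin 2 → ℝ)) := subset_convexHull ℝ _ (by simp)
    have hv6 : ![(lam1 S : ℝ), ((lam0 S - lam1 S : ℤ) : ℝ)] ∈ convexHull ℝ ({![(lam1 S : ℝ), (mu2 S : ℝ)],
          ![((mu0 S - mu2 S : ℤ) : ℝ), (mu2 S : ℝ)],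
          ![(mu1 S : ℝ), ((mu0 S - mu1 S : ℤ) : ℝ)],
          ![(mu1 S : ℝ), (lam2 S : ℝ)],
          ![((lam0 S - lam2 S : ℤ) : ℝ), (lam2 S : ℝ)],
          ![(lam1 S : ℝ), ((lam0 S - lam1 S : ℤ) : ℝ)]} : Set (Fin 2 → ℝ)) := subset_convexHull ℝ _ (by simp)
    have hL : ∃ L : Fin 2 → ℝ, L ∈ convexHull ℝ ({![(lam1 S : ℝ), (mu2 S : ℝ)],
          ![((mu0 S - mu2 S : ℤ) : ℝ), (mu2 S : ℝ)],
          ![(mu1 S : ℝ), ((mu0 S - mu1 S : ℤ) : ℝ)],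
          ![(mu1 S : ℝ), (lam2 S : ℝ)],
          ![((lam0 S - lam2 S : ℤ) : ℝ), (lam2 S : ℝ)],
          ![(lam1 S : ℝ), ((lam0 S - lam1 S : ℤ) : ℝ)]} : Set (Fin 2 → ℝ)) ∧
        L 1 = ((x 1 : ℤ) : ℝ) ∧ L 0 ≤ ((x 0 : ℤ) : ℝ) := by
      by_cases hc : lam0 S ≤ lam1 S + x 1
      · have hc' : ((lam0 S : ℤ) : ℝ) - ((lam1 S : ℤ) : ℝ) ≤ ((x 1 : ℤ) : ℝ) := by
          have h' : ((lam0 S : ℤ) : ℝ) ≤ ((lam1 S : ℤ) : ℝ) + ((x 1 : ℤ) : ℝ) := by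
            exact_mod_cast hc
          linarith
        obtain ⟨a₁, a₂, ha₁, ha₂, hab, hb⟩ :=
          aux_coeff (((lam0 S : ℤ) : ℝ) - ((lam1 S : ℤ) : ℝ)) ((x 1 : ℤ) : ℝ)
            ((mu2 S : ℤ) : ℝ) hc' r4
        refine ⟨![((lam1 S : ℤ) : ℝ), ((x 1 : ℤ) : ℝ)],
          aux_between hv6 hv1 a₁ a₂ ha₁ ha₂ hab ?_ ?_, by simp, by simpa using r1⟩
        · simp only [Matrix.cons_val_zero]
          linear_combination (-((lam1 S : ℤ) : ℝ)) * hab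
        · simp only [Matrix.cons_val_one, Matrix.head_cons]
          push_cast
          push_cast at hb
          linarith
      · push_neg at hc
        have hcc : ((x 1 : ℤ) : ℝ) ≤ ((lam0 S : ℤ) : ℝ) - ((lam1 S : ℤ) : ℝ) := by
          have h' : ((lam1 S : ℤ) : ℝ) + ((x 1 : ℤ) : ℝ) < ((lam0 S : ℤ) : ℝ) := by
            exact_mod_cast hc
          linarith
        obtain ⟨a₁, a₂, ha₁, ha₂, hab, hb⟩ :=
          aux_coeff ((lam2 S : ℤ) : ℝ) ((x 1 : ℤ) : ℝ)
            (((lam0 S : ℤ) : ℝ) - ((lam1 S : ℤ) : ℝ)) r3 hcc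
        refine ⟨![((lam0 S : ℤ) : ℝ) - ((x 1 : ℤ) : ℝ), ((x 1 : ℤ) : ℝ)],
          aux_between hv5 hv6 a₁ a₂ ha₁ ha₂ hab ?_ ?_, by simp,
          by simp only [Matrix.cons_val_zero]; linarith⟩
        · simp only [Matrix.cons_val_zero]
          push_cast
          push_cast at hb
          linear_combination (-1 : ℝ) * hb - ((lam0 S : ℤ) : ℝ) * hab
        · simp only [Matrix.cons_val_one, Matrix.head_cons]
          push_cast
          push_cast at hb
          linarith
    have hR : ∃ R : Fin 2 → ℝ, R ∈ convexHull ℝ ({![(lam1 S : ℝ), (mu2 S : ℝ)],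
          ![((mu0 S - mu2 S : ℤ) : ℝ), (mu2 S : ℝ)],
          ![(mu1 S : ℝ), ((mu0 S - mu1 S : ℤ) : ℝ)],
          ![(mu1 S : ℝ), (lam2 S : ℝ)],
          ![((lam0 S - lam2 S : ℤ) : ℝ), (lam2 S : ℝ)],
          ![(lam1 S : ℝ), ((lam0 S - lam1 S : ℤ) : ℝ)]} : Set (Fin 2 → ℝ)) ∧
        R 1 = ((x 1 : ℤ) : ℝ) ∧ ((x 0 : ℤ) : ℝ) ≤ R 0 := by
      by_cases hc : mu1 S + x 1 ≤ mu0 S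
      · have hc' : ((x 1 : ℤ) : ℝ) ≤ ((mu0 S : ℤ) : ℝ) - ((mu1 S : ℤ) : ℝ) := by
          have h' : ((mu1 S : ℤ) : ℝ) + ((x 1 : ℤ) : ℝ) ≤ ((mu0 S : ℤ) : ℝ) := by
            exact_mod_cast hc
          linarith
        obtain ⟨a₁, a₂, ha₁, ha₂, hab, hb⟩ :=
          aux_coeff ((lam2 S : ℤ) : ℝ) ((x 1 : ℤ) : ℝ)
            (((mu0 S : ℤ) : ℝ) - ((mu1 S : ℤ) : ℝ)) r3 hc'
        refine ⟨![((mu1 S : ℤ) : ℝ), ((x 1 : ℤ) : ℝ)],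
          aux_between hv4 hv3 a₁ a₂ ha₁ ha₂ hab ?_ ?_, by simp, by simpa using r2⟩
        · simp only [Matrix.cons_val_zero]
          linear_combination (-((mu1 S : ℤ) : ℝ)) * hab
        · simp only [Matrix.cons_val_one, Matrix.head_cons]
          push_cast
          push_cast at hb
          linarith
      · push_neg at hc
        have hcc : ((mu0 S : ℤ) : ℝ) - ((mu1 S : ℤ) : ℝ) ≤ ((x 1 : ℤ) : ℝ) := by
          have h' : ((mu0 S : ℤ) : ℝ) < ((mu1 S : ℤ) : ℝ) + ((x 1 : ℤ) : ℝ) := by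
            exact_mod_cast hc
          linarith
        obtain ⟨a₁, a₂, ha₁, ha₂, hab, hb⟩ :=
          aux_coeff (((mu0 S : ℤ) : ℝ) - ((mu1 S : ℤ) : ℝ)) ((x 1 : ℤ) : ℝ)
            ((mu2 S : ℤ) : ℝ) hcc r4
        refine ⟨![((mu0 S : ℤ) : ℝ) - ((x 1 : ℤ) : ℝ), ((x 1 : ℤ) : ℝ)],
          aux_between hv3 hv2 a₁ a₂ ha₁ ha₂ hab ?_ ?_, by simp,
          by simp only [Matrix.cons_val_zero]; linarith⟩
        · simp only [Matrix.cons_val_zero]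
          push_cast
          push_cast at hb
          linear_combination (-1 : ℝ) * hb - ((mu0 S : ℤ) : ℝ) * hab
        · simp only [Matrix.cons_val_one, Matrix.head_cons]
          push_cast
          push_cast at hb
          linarith
    obtain ⟨L, hLm, hL1, hL0⟩ := hL
    obtain ⟨R, hRm, hR1, hR0⟩ := hR
    obtain ⟨a₁, a₂, ha₁, ha₂, hab, hb⟩ := aux_coeff (L 0) ((x 0 : ℤ) : ℝ) (R 0) hL0 hR0
    refine aux_between hLm hRm a₁ a₂ ha₁ ha₂ hab ?_ ?_
    · simpa [toR] using hb
    · simp only [toR]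
      rw [hL1, hR1]
      linear_combination (-((x 1 : ℤ) : ℝ)) * hab
  · apply convexHull_mono
    intro v hv
    simp only [Set.mem_insert_iff, Set.mem_singleton_iff] at hv
    rcases hv with rfl | rfl | rfl | rfl | rfl | rfl
    · obtain ⟨x, hx, h0, h1⟩ := exists_v1 S hne hbd hM
      exact ⟨x, hx, by funext j; fin_cases j <;> simp [toR, h0, h1]⟩
    · obtain ⟨x, hx, hs, h1⟩ := exists_v2 S hne hbd hM
      have h0 : x 0 = mu0 S - mu2 S := by linarith
      exact ⟨x, hx, by funext j; fin_cases j <;> simp [toR, h0, h1]⟩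
    · obtain ⟨x, hx, hs, h0⟩ := exists_v3 S hne hbd hM
      have h1 : x 1 = mu0 S - mu1 S := by linarith
      exact ⟨x, hx, by funext j; fin_cases j <;> simp [toR, h0, h1]⟩
    · obtain ⟨x, hx, h0, h1⟩ := exists_v4 S hne hbd hM
      exact ⟨x, hx, by funext j; fin_cases j <;> simp [toR, h0, h1]⟩
    · obtain ⟨x, hx, hs, h1⟩ := exists_v5 S hne hbd hM
      have h0 : x 0 = lam0 S - lam2 S := by linarith
      exact ⟨x, hx, by funext j; fin_cases j <;> simp [toR, h0, h1]⟩
    · obtain ⟨x, hx, hs, h0⟩ := exists_v6 S hne hbd hM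
      have h1 : x 1 = lam0 S - lam1 S := by linarith
      exact ⟨x, hx, by funext j; fin_cases j <;> simp [toR, h0, h1]⟩
end

section
/- A bivariate function f : T_Φ → ℝ is M♮-concave if and only if the following three inequalities hold for every pair of non-negative integers k, h with k + h ≤ Φ − 2: (i) f(k,h) + f(k+1,h+1) ≤ f(k+1,h) + f(k,h+1); (ii) f(k,h+1) + f(k+2,h) ≤ f(k+1,h+1) + f(k+1,h); (iii) f(k+1,h) + f(k,h+2) ≤ f(k+1,h+1) + f(k,h+1). -/
open Finset

section mono
variable (f : (Fin 2 → ℤ) → ℝ) (Φ : ℤ)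

private lemma D1up
    (h1 : ∀ k h : ℤ, 0 ≤ k → 0 ≤ h → k + h ≤ Φ - 2 →
      f ![k, h] + f ![k+1, h+1] ≤ f ![k+1, h] + f ![k, h+1]) :
    ∀ n : ℤ, 0 ≤ n → ∀ k h : ℤ, 0 ≤ k → 0 ≤ h → k + h + n + 1 ≤ Φ →
      f ![k+1, h+n] - f ![k, h+n] ≤ f ![k+1, h] - f ![k, h] := by
  refine Int.le_induction ?_ ?_
  · intro k h hk hh hS
    rw [show h + (0:ℤ) = h by ring]
  · intro n hn ih k h hk hh hS
    have key := h1 k (h+n) hk (by omega) (by omega)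
    have ihh := ih k h hk hh (by omega)
    rw [show h + (n+1) = h + n + 1 by ring]
    linarith

private lemma D1diag
    (h2 : ∀ k h : ℤ, 0 ≤ k → 0 ≤ h → k + h ≤ Φ - 2 →
      f ![k, h+1] + f ![k+2, h] ≤ f ![k+1, h+1] + f ![k+1, h]) :
    ∀ t : ℤ, 0 ≤ t → ∀ k h : ℤ, 0 ≤ k → 0 ≤ h - t → k + h + 1 ≤ Φ →
      f ![k+t+1, h-t] - f ![k+t, h-t] ≤ f ![k+1, h] - f ![k, h] := by
  refine Int.le_induction ?_ ?_
  · intro k h hk hh hS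
    rw [show k + (0:ℤ) = k by ring, show h - (0:ℤ) = h by ring]
  · intro t ht ih k h hk hh hS
    have ihh := ih k h hk (by omega) hS
    have key := h2 (k+t) (h-t-1) (by omega) (by omega) (by omega)
    rw [show h-t-1+1 = h-t by ring] at key
    rw [show k+(t+1)+1 = k+t+2 by ring, show k+(t+1) = k+t+1 by ring,
      show h-(t+1) = h-t-1 by ring]
    linarith

private lemma D1mono
    (h1 : ∀ k h : ℤ, 0 ≤ k → 0 ≤ h → k + h ≤ Φ - 2 →
      f ![k, h] + f ![k+1, h+1] ≤ f ![k+1, h] + f ![k, h+1])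
    (h2 : ∀ k h : ℤ, 0 ≤ k → 0 ≤ h → k + h ≤ Φ - 2 →
      f ![k, h+1] + f ![k+2, h] ≤ f ![k+1, h+1] + f ![k+1, h])
    (k h k' h' : ℤ) (hk : 0 ≤ k) (hh : 0 ≤ h) (hh' : 0 ≤ h')
    (hkk : k ≤ k') (hsum : k + h ≤ k' + h') (hS : k' + h' + 1 ≤ Φ) :
    f ![k'+1, h'] - f ![k', h'] ≤ f ![k+1, h] - f ![k, h] := by
  have d1 := D1up f Φ h1 (k'+h'-(k+h)) (by omega) k h hk hh (by omega)
  have d2 := D1diag f Φ h2 (k'-k) (by omega) k (h + (k'+h'-(k+h))) hk (by omega) (by omega)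
  rw [show k + (k'-k) + 1 = k'+1 by ring, show k + (k'-k) = k' by ring,
    show h + (k'+h'-(k+h)) - (k'-k) = h' by ring] at d2
  linarith

private lemma Dup
    (h2 : ∀ k h : ℤ, 0 ≤ k → 0 ≤ h → k + h ≤ Φ - 2 →
      f ![k, h+1] + f ![k+2, h] ≤ f ![k+1, h+1] + f ![k+1, h]) :
    ∀ t : ℤ, 0 ≤ t → ∀ k h : ℤ, 0 ≤ k → 0 ≤ h → k + t + h + 1 ≤ Φ →
      f ![k+t+1, h] - f ![k+t, h+1] ≤ f ![k+1, h] - f ![k, h+1] := by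
  refine Int.le_induction ?_ ?_
  · intro k h hk hh hS
    rw [show k + (0:ℤ) = k by ring]
  · intro t ht ih k h hk hh hS
    have key := h2 (k+t) h (by omega) hh (by omega)
    have ihh := ih k h hk hh (by omega)
    rw [show k+(t+1)+1 = k+t+2 by ring, show k+(t+1) = k+t+1 by ring]
    linarith

private lemma Ddown
    (h3 : ∀ k h : ℤ, 0 ≤ k → 0 ≤ h → k + h ≤ Φ - 2 →
      f ![k+1, h] + f ![k, h+2] ≤ f ![k+1, h+1] + f ![k, h+1]) :
    ∀ n : ℤ, 0 ≤ n → ∀ k h : ℤ, 0 ≤ k → 0 ≤ h → k + h + n + 1 ≤ Φ →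
      f ![k+1, h] - f ![k, h+1] ≤ f ![k+1, h+n] - f ![k, h+n+1] := by
  refine Int.le_induction ?_ ?_
  · intro k h hk hh hS
    rw [show h + (0:ℤ) = h by ring]
  · intro n hn ih k h hk hh hS
    have key := h3 k (h+n) hk (by omega) (by omega)
    have ihh := ih k h hk hh (by omega)
    rw [show h + (n+1) = h + n + 1 by ring, show h+n+1+1 = h+n+2 by ring]
    linarith

private lemma Dmono
    (h2 : ∀ k h : ℤ, 0 ≤ k → 0 ≤ h → k + h ≤ Φ - 2 →
      f ![k, h+1] + f ![k+2, h] ≤ f ![k+1, h+1] + f ![k+1, h])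
    (h3 : ∀ k h : ℤ, 0 ≤ k → 0 ≤ h → k + h ≤ Φ - 2 →
      f ![k+1, h] + f ![k, h+2] ≤ f ![k+1, h+1] + f ![k, h+1])
    (k h k' h' : ℤ) (hk : 0 ≤ k) (hh' : 0 ≤ h') (hkk : k ≤ k') (hhh : h' ≤ h)
    (hS1 : k' + h' + 1 ≤ Φ) (hS2 : k + h + 1 ≤ Φ) :
    f ![k'+1, h'] - f ![k', h'+1] ≤ f ![k+1, h] - f ![k, h+1] := by
  have d1 := Dup f Φ h2 (k'-k) (by omega) k h' hk hh' (by omega)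
  have d2 := Ddown f Φ h3 (h-h') (by omega) k h' hk hh' (by omega)
  rw [show k + (k'-k) + 1 = k'+1 by ring, show k + (k'-k) = k' by ring] at d1
  rw [show h' + (h-h') = h by ring] at d2
  linarith

private lemma D2up
    (h1 : ∀ k h : ℤ, 0 ≤ k → 0 ≤ h → k + h ≤ Φ - 2 →
      f ![k, h] + f ![k+1, h+1] ≤ f ![k+1, h] + f ![k, h+1]) :
    ∀ t : ℤ, 0 ≤ t → ∀ k h : ℤ, 0 ≤ k → 0 ≤ h → k + t + h + 1 ≤ Φ →
      f ![k+t, h+1] - f ![k+t, h] ≤ f ![k, h+1] - f ![k, h] := by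
  refine Int.le_induction ?_ ?_
  · intro k h hk hh hS
    rw [show k + (0:ℤ) = k by ring]
  · intro t ht ih k h hk hh hS
    have key := h1 (k+t) h (by omega) hh (by omega)
    have ihh := ih k h hk hh (by omega)
    rw [show k+(t+1) = k+t+1 by ring]
    linarith

private lemma D2diag
    (h3 : ∀ k h : ℤ, 0 ≤ k → 0 ≤ h → k + h ≤ Φ - 2 →
      f ![k+1, h] + f ![k, h+2] ≤ f ![k+1, h+1] + f ![k, h+1]) :
    ∀ t : ℤ, 0 ≤ t → ∀ k h : ℤ, 0 ≤ k - t → 0 ≤ h → k + h + 1 ≤ Φ →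
      f ![k-t, h+t+1] - f ![k-t, h+t] ≤ f ![k, h+1] - f ![k, h] := by
  refine Int.le_induction ?_ ?_
  · intro k h hk hh hS
    rw [show k - (0:ℤ) = k by ring, show h + (0:ℤ) = h by ring]
  · intro t ht ih k h hk hh hS
    have ihh := ih k h (by omega) hh hS
    have key := h3 (k-t-1) (h+t) (by omega) (by omega) (by omega)
    rw [show k-t-1+1 = k-t by ring] at key
    rw [show h+(t+1)+1 = h+t+2 by ring, show h+(t+1) = h+t+1 by ring,
      show k-(t+1) = k-t-1 by ring]
    linarith

private lemma D2mono
    (h1 : ∀ k h : ℤ, 0 ≤ k → 0 ≤ h → k + h ≤ Φ - 2 →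
      f ![k, h] + f ![k+1, h+1] ≤ f ![k+1, h] + f ![k, h+1])
    (h3 : ∀ k h : ℤ, 0 ≤ k → 0 ≤ h → k + h ≤ Φ - 2 →
      f ![k+1, h] + f ![k, h+2] ≤ f ![k+1, h+1] + f ![k, h+1])
    (k h k' h' : ℤ) (hk : 0 ≤ k) (hh : 0 ≤ h) (hk' : 0 ≤ k')
    (hhh : h ≤ h') (hsum : k + h ≤ k' + h') (hS : k' + h' + 1 ≤ Φ) :
    f ![k', h'+1] - f ![k', h'] ≤ f ![k, h+1] - f ![k, h] := by
  have d1 := D2up f Φ h1 (k'+h'-(k+h)) (by omega) k h hk hh (by omega)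
  have d2 := D2diag f Φ h3 (h'-h) (by omega) (k + (k'+h'-(k+h))) h (by omega) hh (by omega)
  rw [show k + (k'+h'-(k+h)) - (h'-h) = k' by ring, show h + (h'-h) + 1 = h'+1 by ring,
    show h + (h'-h) = h' by ring] at d2
  linarith

private lemma vs0n (a b : ℤ) :
    (![a,b] : Fin 2 → ℤ) - Pi.single 0 1 + chi none = ![a-1, b] := by
  funext j; fin_cases j <;>
    simp [chi, Matrix.vecHead, Matrix.vecTail, Pi.single_apply, Function.comp]

private lemma va0n (a b : ℤ) :
    (![a,b] : Fin 2 → ℤ) + Pi.single 0 1 - chi none = ![a+1, b] := by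
  funext j; fin_cases j <;>
    simp [chi, Matrix.vecHead, Matrix.vecTail, Pi.single_apply, Function.comp]

private lemma vs0s1 (a b : ℤ) :
    (![a,b] : Fin 2 → ℤ) - Pi.single 0 1 + chi (some 1) = ![a-1, b+1] := by
  funext j; fin_cases j <;>
    simp [chi, Matrix.vecHead, Matrix.vecTail, Pi.single_apply, Function.comp]

private lemma va0s1 (a b : ℤ) :
    (![a,b] : Fin 2 → ℤ) + Pi.single 0 1 - chi (some 1) = ![a+1, b-1] := by
  funext j; fin_cases j <;>
    simp [chi, Matrix.vecHead, Matrix.vecTail, Pi.single_apply, Function.comp]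

private lemma vs1n (a b : ℤ) :
    (![a,b] : Fin 2 → ℤ) - Pi.single 1 1 + chi none = ![a, b-1] := by
  funext j; fin_cases j <;>
    simp [chi, Matrix.vecHead, Matrix.vecTail, Pi.single_apply, Function.comp]

private lemma va1n (a b : ℤ) :
    (![a,b] : Fin 2 → ℤ) + Pi.single 1 1 - chi none = ![a, b+1] := by
  funext j; fin_cases j <;>
    simp [chi, Matrix.vecHead, Matrix.vecTail, Pi.single_apply, Function.comp]

private lemma vs1s0 (a b : ℤ) :
    (![a,b] : Fin 2 → ℤ) - Pi.single 1 1 + chi (some 0) = ![a+1, b-1] := by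
  funext j; fin_cases j <;>
    simp [chi, Matrix.vecHead, Matrix.vecTail, Pi.single_apply, Function.comp]

private lemma va1s0 (a b : ℤ) :
    (![a,b] : Fin 2 → ℤ) + Pi.single 1 1 - chi (some 0) = ![a-1, b+1] := by
  funext j; fin_cases j <;>
    simp [chi, Matrix.vecHead, Matrix.vecTail, Pi.single_apply, Function.comp]

private lemma memTPhi (a b : ℤ) (h1 : 0 ≤ a) (h2 : 0 ≤ b) (h3 : a + b ≤ Φ) :
    (![a,b] : Fin 2 → ℤ) ∈ TPhi Φ := by
  refine ⟨?_, ?_, ?_⟩ <;>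
    simp only [Matrix.cons_val_zero, Matrix.cons_val_one, Matrix.head_cons] <;> omega

end mono

theorem stmt4 (Φ : ℤ) (hΦ : 0 < Φ) (f : (Fin 2 → ℤ) → ℝ) :
    MnConcaveOn Φ f ↔
      ∀ k h : ℤ, 0 ≤ k → 0 ≤ h → k + h ≤ Φ - 2 →
        (f ![k, h] + f ![k + 1, h + 1] ≤ f ![k + 1, h] + f ![k, h + 1]) ∧
        (f ![k, h + 1] + f ![k + 2, h] ≤ f ![k + 1, h + 1] + f ![k + 1, h]) ∧
        (f ![k + 1, h] + f ![k, h + 2] ≤ f ![k + 1, h + 1] + f ![k, h + 1]) := by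
  constructor
  · intro hM k h hk hh hkh
    refine ⟨?_, ?_, ?_⟩
    · obtain ⟨j, hj, _, _, hle⟩ :=
        hM ![k+1, h+1] (memTPhi Φ _ _ (by omega) (by omega) (by omega))
          ![k, h] (memTPhi Φ _ _ hk hh (by omega)) 0
          (by simp only [Matrix.cons_val_zero]; omega)
      rcases j with _ | j
      · rw [vs0n, va0n, show k+1-1 = k by ring] at hle
        linarith
      · have hj2 : j = 0 ∨ j = 1 := by fin_cases j <;> simp
        rcases hj2 with rfl | rfl
        · have h0 := hj _ rfl
          simp only [Matrix.cons_val_zero] at h0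
          exact absurd h0 (by omega)
        · have h0 := hj _ rfl
          simp only [Matrix.cons_val_one, Matrix.head_cons, Matrix.cons_val_zero] at h0
          exact absurd h0 (by omega)
    · obtain ⟨j, hj, _, _, hle⟩ :=
        hM ![k+2, h] (memTPhi Φ _ _ (by omega) hh (by omega))
          ![k, h+1] (memTPhi Φ _ _ hk (by omega) (by omega)) 0
          (by simp only [Matrix.cons_val_zero]; omega)
      rcases j with _ | j
      · rw [vs0n, va0n, show k+2-1 = k+1 by ring] at hle
        linarith
      · have hj2 : j = 0 ∨ j = 1 := by fin_cases j <;> simp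
        rcases hj2 with rfl | rfl
        · have h0 := hj _ rfl
          simp only [Matrix.cons_val_zero] at h0
          exact absurd h0 (by omega)
        · rw [vs0s1, va0s1, show k+2-1 = k+1 by ring, show h+1-1 = h by ring] at hle
          linarith
    · obtain ⟨j, hj, _, _, hle⟩ :=
        hM ![k, h+2] (memTPhi Φ _ _ hk (by omega) (by omega))
          ![k+1, h] (memTPhi Φ _ _ (by omega) hh (by omega)) 1
          (by simp only [Matrix.cons_val_one, Matrix.head_cons, Matrix.cons_val_zero]; omega)
      rcases j with _ | j
      · rw [vs1n, va1n, show h+2-1 = h+1 by ring] at hle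
        linarith
      · have hj2 : j = 0 ∨ j = 1 := by fin_cases j <;> simp
        rcases hj2 with rfl | rfl
        · rw [vs1s0, va1s0, show h+2-1 = h+1 by ring, show k+1-1 = k by ring] at hle
          linarith
        · have h0 := hj _ rfl
          simp only [Matrix.cons_val_one, Matrix.head_cons, Matrix.cons_val_zero] at h0
          exact absurd h0 (by omega)
  · intro hloc x hx y hy i hyx
    obtain ⟨a, b, rfl⟩ : ∃ a b, x = ![a, b] :=
      ⟨x 0, x 1, by funext j; fin_cases j <;> simp⟩
    obtain ⟨c, d, rfl⟩ : ∃ c d, y = ![c, d] :=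
      ⟨y 0, y 1, by funext j; fin_cases j <;> simp⟩
    obtain ⟨ha, hb, hab⟩ : 0 ≤ a ∧ 0 ≤ b ∧ a + b ≤ Φ := by
      simpa [TPhi] using hx
    obtain ⟨hc, hd, hcd⟩ : 0 ≤ c ∧ 0 ≤ d ∧ c + d ≤ Φ := by
      simpa [TPhi] using hy
    have h1 := fun k h hk hh hs => (hloc k h hk hh hs).1
    have h2 := fun k h hk hh hs => (hloc k h hk hh hs).2.1
    have h3 := fun k h hk hh hs => (hloc k h hk hh hs).2.2
    have hi : i = 0 ∨ i = 1 := by fin_cases i <;> simp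
    rcases hi with rfl | rfl
    · simp only [Matrix.cons_val_zero] at hyx
      rcases le_or_gt d b with hB | hA
      · refine ⟨none, by intro j' hj'; exact (nomatch hj'), ?_, ?_, ?_⟩
        · rw [vs0n]; exact memTPhi Φ _ _ (by omega) hb (by omega)
        · rw [va0n]; exact memTPhi Φ _ _ (by omega) hd (by omega)
        · rw [vs0n, va0n]
          have key := D1mono f Φ h1 h2 c d (a-1) b hc hd hb (by omega) (by omega) (by omega)
          rw [show a-1+1 = a by ring] at key
          linarith
      · refine ⟨some 1, ?_, ?_, ?_, ?_⟩
        · intro j' hj'; cases hj'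
          simp only [Matrix.cons_val_one, Matrix.head_cons]; exact hA
        · rw [vs0s1]; exact memTPhi Φ _ _ (by omega) (by omega) (by omega)
        · rw [va0s1]; exact memTPhi Φ _ _ (by omega) (by omega) (by omega)
        · rw [vs0s1, va0s1]
          have key := Dmono f Φ h2 h3 c (d-1) (a-1) b hc hb (by omega) (by omega)
            (by omega) (by omega)
          rw [show a-1+1 = a by ring, show d-1+1 = d by ring] at key
          linarith
    · simp only [Matrix.cons_val_one, Matrix.head_cons, Matrix.cons_val_zero] at hyx
      rcases le_or_gt c a with hB | hA
      · refine ⟨none, by intro j' hj'; exact (nomatch hj'), ?_, ?_, ?_⟩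
        · rw [vs1n]; exact memTPhi Φ _ _ ha (by omega) (by omega)
        · rw [va1n]; exact memTPhi Φ _ _ hc (by omega) (by omega)
        · rw [vs1n, va1n]
          have key := D2mono f Φ h1 h3 c d a (b-1) hc hd ha (by omega) (by omega) (by omega)
          rw [show b-1+1 = b by ring] at key
          linarith
      · refine ⟨some 0, ?_, ?_, ?_, ?_⟩
        · intro j' hj'; cases hj'
          simp only [Matrix.cons_val_zero]; exact hA
        · rw [vs1s0]; exact memTPhi Φ _ _ (by omega) (by omega) (by omega)
        · rw [va1s0]; exact memTPhi Φ _ _ (by omega) (by omega) (by omega)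
        · rw [vs1s0, va1s0]
          have key := Dmono f Φ h2 h3 a (b-1) (c-1) d ha hd (by omega) (by omega)
            (by omega) (by omega)
          rw [show c-1+1 = c by ring, show b-1+1 = b by ring] at key
          linarith
end

section
/- A bivariate function f : T_Φ → ℝ is M♮-concave if and only if for every p ∈ ℝ² the maximizer set D_f(p) = { x ∈ T_Φ : f(x) − ⟨p,x⟩ ≥ f(y) − ⟨p,y⟩ for every y ∈ T_Φ } is an M♮-convex subset of ℤ². -/
open Finset

namespace Stmt5Aux


abbrev P2 := ℤ × ℤ

/-- Exchange property in pair form. -/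
def Mn2 (S : Set P2) : Prop :=
  ∀ x ∈ S, ∀ y ∈ S,
    (y.1 < x.1 →
      (((x.1 - 1, x.2) ∈ S ∧ (y.1 + 1, y.2) ∈ S) ∨
       (x.2 < y.2 ∧ (x.1 - 1, x.2 + 1) ∈ S ∧ (y.1 + 1, y.2 - 1) ∈ S))) ∧
    (y.2 < x.2 →
      (((x.1, x.2 - 1) ∈ S ∧ (y.1, y.2 + 1) ∈ S) ∨
       (x.1 < y.1 ∧ (x.1 + 1, x.2 - 1) ∈ S ∧ (y.1 - 1, y.2 + 1) ∈ S)))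

lemma lvl_aux (S : Set P2) (hS : Mn2 S) (s : ℤ) :
    ∀ n : ℕ, ∀ u ∈ S, ∀ v ∈ S, u.1 + u.2 ≤ s → s ≤ v.1 + v.2 →
      ((v.1 + v.2) - (u.1 + u.2)).toNat + (v.1 - u.1).natAbs + (v.2 - u.2).natAbs ≤ n →
      ∃ x ∈ S, x.1 + x.2 = s := by
  intro n
  induction n with
  | zero =>
      intro u hu v hv h1 h2 hm
      exact ⟨u, hu, by omega⟩
  | succ n ih =>
      intro u hu v hv h1 h2 hm
      by_cases he : u.1 + u.2 = s
      · exact ⟨u, hu, he⟩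
      by_cases he2 : v.1 + v.2 = s
      · exact ⟨v, hv, he2⟩
      have h1' : u.1 + u.2 < s := lt_of_le_of_ne h1 he
      have h2' : s < v.1 + v.2 := lt_of_le_of_ne (by omega) (by omega)
      rcases lt_or_ge u.1 v.1 with hc | hc
      · rcases (hS v hv u hu).1 hc with ⟨hv', hu'⟩ | ⟨hlt, hv', hu'⟩
        · exact ih _ hu' _ hv' (by omega) (by omega) (by simp only [] at *; omega)
        · exact ih _ hu' _ hv' (by omega) (by omega) (by simp only [] at *; omega)
      · have hc2 : u.2 < v.2 := by omega
        rcases (hS v hv u hu).2 hc2 with ⟨hv', hu'⟩ | ⟨hlt, hv', hu'⟩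
        · exact ih _ hu' _ hv' (by omega) (by omega) (by simp only [] at *; omega)
        · exact ih _ hu' _ hv' (by omega) (by omega) (by simp only [] at *; omega)

lemma lvl (S : Set P2) (hS : Mn2 S) (s : ℤ)
    (hu : ∃ u ∈ S, u.1 + u.2 ≤ s) (hv : ∃ v ∈ S, s ≤ v.1 + v.2) :
    ∃ x ∈ S, x.1 + x.2 = s := by
  obtain ⟨u, hu, h1⟩ := hu
  obtain ⟨v, hv, h2⟩ := hv
  exact lvl_aux S hS s _ u hu v hv h1 h2 le_rfl

lemma dstep (S : Set P2) (hS : Mn2 S) (x : P2) (hx : x ∈ S) (y : P2) (hy : y ∈ S)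
    (hsum : x.1 + x.2 = y.1 + y.2) (h2 : x.1 + 2 ≤ y.1) : (x.1 + 1, x.2 - 1) ∈ S := by
  rcases (hS y hy x hx).1 (by omega) with ⟨hu, hv⟩ | ⟨_, _, hx'⟩
  · -- hu : (y.1-1, y.2) ∈ S, hv : (x.1+1, x.2) ∈ S
    have hlt2 : (y.1 - 1, y.2).2 < (x.1 + 1, x.2).2 := by simp only []; omega
    rcases (hS (x.1 + 1, x.2) hv (y.1 - 1, y.2) hu).2 hlt2 with ⟨h1, _⟩ | ⟨hlt, hv2, _⟩
    · exact h1
    · -- hv2 : (x.1+2, x.2-1) ∈ S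
      rcases (hS (x.1 + 1 + 1, x.2 - 1) hv2 x hx).1 (by simp only []; omega) with
        ⟨h1, _⟩ | ⟨_, _, h3⟩
      · simpa using h1
      · simpa using h3
  · exact hx'

lemma dconv_aux (S : Set P2) (hS : Mn2 S) :
    ∀ n : ℕ, ∀ x ∈ S, ∀ y ∈ S, x.1 + x.2 = y.1 + y.2 → ∀ t : ℤ, x.1 ≤ t → t ≤ y.1 →
      (y.1 - x.1).toNat ≤ n → (t, x.1 + x.2 - t) ∈ S := by
  intro n
  induction n with
  | zero =>
      intro x hx y hy hsum t h1 h2 hm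
      have ht : t = x.1 := by omega
      have hxx : (t, x.1 + x.2 - t) = x := by
        rw [ht]; rw [show x.1 + x.2 - x.1 = x.2 by ring]
      rwa [hxx]
  | succ n ih =>
      intro x hx y hy hsum t h1 h2 hm
      by_cases he : t = x.1
      · have hxx : (t, x.1 + x.2 - t) = x := by
          rw [he]; rw [show x.1 + x.2 - x.1 = x.2 by ring]
        rwa [hxx]
      · by_cases he2 : y.1 = x.1 + 1
        · have ht : t = y.1 := by omega
          have hyy : (t, x.1 + x.2 - t) = y := by
            rw [ht]; rw [show x.1 + x.2 - y.1 = y.2 by omega]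
          rwa [hyy]
        · have hstep := dstep S hS x hx y hy hsum (by omega)
          have := ih (x.1 + 1, x.2 - 1) hstep y hy (by simp only []; omega) t
            (by simp only []; omega) h2 (by simp only []; omega)
          simpa only [show (x.1+1) + (x.2-1) = x.1 + x.2 by ring] using this

lemma dconv (S : Set P2) (hS : Mn2 S) (x : P2) (hx : x ∈ S) (y : P2) (hy : y ∈ S)
    (hsum : x.1 + x.2 = y.1 + y.2) (t : ℤ) (h1 : x.1 ≤ t) (h2 : t ≤ y.1) :
    (t, x.1 + x.2 - t) ∈ S :=
  dconv_aux S hS _ x hx y hy hsum t h1 h2 le_rfl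

lemma left_reach (S : Set P2) (hS : Mn2 S) (hfin : S.Finite) (s w1 : ℤ)
    (hlvl : ∃ x ∈ S, x.1 + x.2 = s) (ha : ∃ a ∈ S, a.1 ≤ w1)
    (hb : ∃ b ∈ S, s - w1 ≤ b.2) :
    ∃ x ∈ S, x.1 + x.2 = s ∧ x.1 ≤ w1 := by
  classical
  set L : Set P2 := {z ∈ S | z.1 + z.2 = s} with hL
  have hLfin : L.Finite := hfin.subset (fun z hz => hz.1)
  have hLne : L.Nonempty := by
    obtain ⟨x, hx, hxs⟩ := hlvl
    exact ⟨x, hx, hxs⟩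
  obtain ⟨x, hxL, hmin⟩ := Set.exists_min_image L (fun z => z.1) hLfin hLne
  by_cases hle : x.1 ≤ w1
  · exact ⟨x, hxL.1, hxL.2, hle⟩
  push_neg at hle
  exfalso
  obtain ⟨a, haS, haw⟩ := ha
  obtain ⟨b, hbS, hbw⟩ := hb
  have hxS := hxL.1
  have hxs := hxL.2
  -- get x-down
  have hxd : (x.1 - 1, x.2) ∈ S := by
    rcases (hS x hxS a haS).1 (by omega) with ⟨h, _⟩ | ⟨_, h, _⟩
    · exact h
    · exact absurd (hmin (x.1 - 1, x.2 + 1) ⟨h, by simp only []; omega⟩) (by simp only []; omega)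
  -- get x-up
  have hxu : (x.1, x.2 + 1) ∈ S := by
    have hx2 : x.2 < b.2 := by omega
    rcases (hS b hbS x hxS).2 hx2 with ⟨_, h⟩ | ⟨_, _, h⟩
    · exact h
    · exact absurd (hmin (x.1 - 1, x.2 + 1) ⟨h, by simp only []; omega⟩) (by simp only []; omega)
  -- combine
  rcases (hS (x.1, x.2 + 1) hxu (x.1 - 1, x.2) hxd).2 (by simp only []; omega) with
    ⟨_, h⟩ | ⟨h, _, _⟩
  · exact absurd (hmin (x.1 - 1, x.2 + 1) ⟨h, by simp only []; omega⟩) (by simp only []; omega)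
  · simp only [] at h; omega

def swapS (S : Set P2) : Set P2 := {z | (z.2, z.1) ∈ S}

lemma mn2_swap (S : Set P2) (hS : Mn2 S) : Mn2 (swapS S) := by
  intro x hx y hy
  constructor
  · intro h
    rcases (hS _ hx _ hy).2 h with ⟨h1, h2⟩ | ⟨h0, h1, h2⟩
    · exact Or.inl ⟨h1, h2⟩
    · exact Or.inr ⟨h0, h1, h2⟩
  · intro h
    rcases (hS _ hx _ hy).1 h with ⟨h1, h2⟩ | ⟨h0, h1, h2⟩
    · exact Or.inl ⟨h1, h2⟩
    · exact Or.inr ⟨h0, h1, h2⟩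

lemma swapS_fin (S : Set P2) (hfin : S.Finite) : (swapS S).Finite := by
  have : swapS S ⊆ Prod.swap '' S := by
    intro z hz
    exact ⟨(z.2, z.1), hz, by simp⟩
  exact (hfin.image _).subset this

/-- The filling lemma: a finite M♮-convex set contains every lattice point satisfying the
six bound constraints witnessed by members of the set. -/
lemma fill (S : Set P2) (hS : Mn2 S) (hfin : S.Finite) (w : P2)
    (ha : ∃ a ∈ S, a.1 ≤ w.1) (hb : ∃ a ∈ S, w.1 ≤ a.1)
    (hc : ∃ a ∈ S, a.2 ≤ w.2) (hd : ∃ a ∈ S, w.2 ≤ a.2)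
    (he : ∃ a ∈ S, a.1 + a.2 ≤ w.1 + w.2) (hf : ∃ a ∈ S, w.1 + w.2 ≤ a.1 + a.2) :
    w ∈ S := by
  set s : ℤ := w.1 + w.2 with hs
  have hlvl : ∃ x ∈ S, x.1 + x.2 = s := lvl S hS s he hf
  obtain ⟨x, hxS, hxs, hxw⟩ := left_reach S hS hfin s w.1 hlvl ha
    (by obtain ⟨b, hbS, hbw⟩ := hd; exact ⟨b, hbS, by omega⟩)
  -- right reach via swap
  have hlvl' : ∃ z ∈ swapS S, z.1 + z.2 = s := by
    obtain ⟨z, hz, hzs⟩ := hlvl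
    exact ⟨(z.2, z.1), by simpa [swapS] using hz, by simp only []; omega⟩
  obtain ⟨z, hzS, hzs, hzw⟩ := left_reach (swapS S) (mn2_swap S hS) (swapS_fin S hfin) s w.2
    hlvl'
    (by obtain ⟨a, haS, haw⟩ := hc; exact ⟨(a.2, a.1), by simpa [swapS] using haS, haw⟩)
    (by obtain ⟨a, haS, haw⟩ := hb; exact ⟨(a.2, a.1), by simpa [swapS] using haS, by omega⟩)
  have hyS : (z.2, z.1) ∈ S := hzS
  have hy1 : w.1 ≤ z.2 := by omega
  have := dconv S hS x hxS (z.2, z.1) hyS (by simp only []; omega) w.1 hxw hy1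
  have hw : (w.1, x.1 + x.2 - w.1) = w := by
    have h : x.1 + x.2 - w.1 = w.2 := by omega
    rw [h]
  rwa [hw] at this




def inT (Φ : ℤ) (x : P2) : Prop := 0 ≤ x.1 ∧ 0 ≤ x.2 ∧ x.1 + x.2 ≤ Φ

noncomputable def Tf (Φ : ℤ) : Finset P2 :=
  (Finset.Icc ((0:ℤ), (0:ℤ)) (Φ, Φ)).filter (fun x => x.1 + x.2 ≤ Φ)

lemma mem_Tf {Φ : ℤ} {x : P2} : x ∈ Tf Φ ↔ inT Φ x := by
  simp only [Tf, Finset.mem_filter, Finset.mem_Icc, Prod.le_def, inT]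
  constructor
  · rintro ⟨⟨⟨h1, h2⟩, _⟩, h5⟩; exact ⟨h1, h2, h5⟩
  · rintro ⟨h1, h2, h3⟩; exact ⟨⟨⟨h1, h2⟩, ⟨by omega, by omega⟩⟩, h3⟩

lemma Tf_nonempty {Φ : ℤ} (hΦ : 0 < Φ) : (Tf Φ).Nonempty :=
  ⟨(0, 0), mem_Tf.2 ⟨le_rfl, le_rfl, by omega⟩⟩

def dotR (p q : ℝ × ℝ) : ℝ := p.1 * q.1 + p.2 * q.2

def pr (w : P2) : ℝ × ℝ := ((w.1 : ℝ), (w.2 : ℝ))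

lemma pr_inj : Function.Injective pr := by
  intro a b h
  simp only [pr, Prod.ext_iff] at h
  exact Prod.ext_iff.2 ⟨by exact_mod_cast h.1, by exact_mod_cast h.2⟩

lemma dotR_sub (p a b : ℝ × ℝ) : dotR p (a - b) = dotR p a - dotR p b := by
  simp only [dotR, Prod.fst_sub, Prod.snd_sub]; ring

lemma dotR_add_smul (p q : ℝ × ℝ) (t : ℝ) (v : ℝ × ℝ) :
    dotR (p + t • q) v = dotR p v + t * dotR q v := by
  simp only [dotR, Prod.fst_add, Prod.snd_add, Prod.smul_fst, Prod.smul_snd, smul_eq_mul]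
  ring

lemma cont_sup' {ι : Type*} (s : Finset ι) (hs : s.Nonempty) (f : ι → (ℝ × ℝ) → ℝ)
    (hf : ∀ i, Continuous (f i)) :
    Continuous fun p => s.sup' hs (fun i => f i p) := by
  induction hs using Finset.Nonempty.cons_induction with
  | singleton a => simpa using hf a
  | cons a s ha hs ih =>
      have heq : (fun p => (Finset.cons a s ha).sup' (Finset.cons_nonempty ha)
          (fun i => f i p)) = fun p => max (f a p) (s.sup' hs (fun i => f i p)) := by
        funext p
        rw [Finset.sup'_cons]
      rw [heq]
      exact (hf a).max ih

lemma corner_bound (Φ : ℤ) (hΦ : 0 < Φ) (c : ℝ × ℝ)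
    (hc1 : 1/2 ≤ c.1) (hc2 : 1/2 ≤ c.2) (hcs : c.1 + c.2 ≤ (Φ : ℝ) - 1/2) (q : ℝ × ℝ) :
    ∃ w ∈ Tf Φ, (|q.1| + |q.2|) / 4 ≤ dotR q (c - pr w) := by
  have h00 : ((0:ℤ), (0:ℤ)) ∈ Tf Φ := mem_Tf.2 ⟨le_rfl, le_rfl, by omega⟩
  have hϕ0 : ((Φ:ℤ), (0:ℤ)) ∈ Tf Φ := mem_Tf.2 ⟨by omega, le_rfl, by omega⟩
  have h0ϕ : ((0:ℤ), (Φ:ℤ)) ∈ Tf Φ := mem_Tf.2 ⟨le_rfl, by omega, by omega⟩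
  have hΦR : (1:ℝ) ≤ (Φ:ℝ) := by exact_mod_cast hΦ
  rcases le_or_gt 0 q.1 with hq1 | hq1 <;> rcases le_or_gt 0 q.2 with hq2 | hq2
  · refine ⟨(0,0), h00, ?_⟩
    rw [abs_of_nonneg hq1, abs_of_nonneg hq2]
    simp only [dotR, pr, Prod.fst_sub, Prod.snd_sub, Int.cast_zero]
    nlinarith
  · refine ⟨(0, Φ), h0ϕ, ?_⟩
    rw [abs_of_nonneg hq1, abs_of_neg hq2]
    simp only [dotR, pr, Prod.fst_sub, Prod.snd_sub, Int.cast_zero]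
    nlinarith
  · refine ⟨(Φ, 0), hϕ0, ?_⟩
    rw [abs_of_neg hq1, abs_of_nonneg hq2]
    simp only [dotR, pr, Prod.fst_sub, Prod.snd_sub, Int.cast_zero]
    nlinarith
  · rcases le_or_gt q.1 q.2 with hcmp | hcmp
    · refine ⟨(Φ, 0), hϕ0, ?_⟩
      rw [abs_of_neg hq1, abs_of_neg hq2]
      simp only [dotR, pr, Prod.fst_sub, Prod.snd_sub, Int.cast_zero]
      nlinarith
    · refine ⟨(0, Φ), h0ϕ, ?_⟩
      rw [abs_of_neg hq1, abs_of_neg hq2]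
      simp only [dotR, pr, Prod.fst_sub, Prod.snd_sub, Int.cast_zero]
      nlinarith

/-- Exact LP duality with attainment, at an interior point `c` of the triangle. -/
lemma dual (Φ : ℤ) (hΦ : 0 < Φ) (F : P2 → ℝ) (c : ℝ × ℝ)
    (hc1 : 1/2 ≤ c.1) (hc2 : 1/2 ≤ c.2) (hcs : c.1 + c.2 ≤ (Φ : ℝ) - 1/2) :
    ∃ (p : ℝ × ℝ) (lam : P2 → ℝ),
      (∀ w, 0 ≤ lam w) ∧ (∑ w ∈ Tf Φ, lam w = 1) ∧
      (∑ w ∈ Tf Φ, lam w * ((w.1 : ℝ)) = c.1) ∧ (∑ w ∈ Tf Φ, lam w * ((w.2 : ℝ)) = c.2) ∧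
      (∀ w ∈ Tf Φ, lam w ≠ 0 → ∀ w' ∈ Tf Φ,
        F w' - dotR p (pr w') ≤ F w - dotR p (pr w)) := by
  classical
  have hTne : (Tf Φ).Nonempty := Tf_nonempty hΦ
  set g : (ℝ × ℝ) → P2 → ℝ := fun p w => F w + dotR p (c - pr w) with hg
  set Ψ : (ℝ × ℝ) → ℝ := fun p => (Tf Φ).sup' hTne (g p) with hΨ
  have hΨcont : Continuous Ψ := by
    apply cont_sup'
    intro w
    have : Continuous fun p : ℝ × ℝ => dotR p (c - pr w) := by
      simp only [dotR]
      exact (continuous_fst.mul continuous_const).add (continuous_snd.mul continuous_const)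
    exact continuous_const.add this
  set Fmin : ℝ := (Tf Φ).inf' hTne F with hFmin
  have hcoer : ∀ p : ℝ × ℝ, Fmin + (|p.1| + |p.2|) / 4 ≤ Ψ p := by
    intro p
    obtain ⟨w, hw, hwb⟩ := corner_bound Φ hΦ c hc1 hc2 hcs p
    calc Fmin + (|p.1| + |p.2|) / 4 ≤ F w + dotR p (c - pr w) := by
          have := Finset.inf'_le F hw
          linarith
      _ ≤ Ψ p := Finset.le_sup' (g p) hw
  have hΨ0 : Fmin ≤ Ψ 0 := by
    obtain ⟨w, hw⟩ := hTne
    have h1 := Finset.inf'_le F hw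
    have h2 := Finset.le_sup' (g (0:ℝ×ℝ)) hw
    have h3 : g (0:ℝ×ℝ) w = F w := by simp [hg, dotR]
    rw [h3] at h2
    linarith
  set R : ℝ := 4 * (Ψ 0 - Fmin) with hR
  have hR0 : 0 ≤ R := by simp only [hR]; linarith
  obtain ⟨p, hpK, hpmin'⟩ := (isCompact_closedBall (0 : ℝ × ℝ) R).exists_isMinOn
    ⟨0, Metric.mem_closedBall_self hR0⟩ hΨcont.continuousOn
  have hpmin : ∀ q ∈ Metric.closedBall (0:ℝ×ℝ) R, Ψ p ≤ Ψ q := fun q hq => hpmin' hq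
  have hglobal : ∀ q : ℝ × ℝ, Ψ p ≤ Ψ q := by
    intro q
    by_cases hq : q ∈ Metric.closedBall (0 : ℝ × ℝ) R
    · exact hpmin q hq
    · have hnq : R < ‖q‖ := by
        simp only [Metric.mem_closedBall, dist_zero_right, not_le] at hq
        exact hq
      have habs : ‖q‖ ≤ |q.1| + |q.2| := by
        rw [Prod.norm_def]
        simp only [Real.norm_eq_abs]
        exact max_le (le_add_of_nonneg_right (abs_nonneg _))
          (le_add_of_nonneg_left (abs_nonneg _))
      calc Ψ p ≤ Ψ 0 := hpmin 0 (Metric.mem_closedBall_self hR0)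
        _ ≤ Fmin + R / 4 := by simp only [hR]; linarith
        _ ≤ Fmin + (|q.1| + |q.2|) / 4 := by
            have : R ≤ |q.1| + |q.2| := le_trans (le_of_lt hnq) habs
            linarith
        _ ≤ Ψ q := hcoer q
  set A : Finset P2 := (Tf Φ).filter (fun w => g p w = Ψ p) with hA
  have hAne : A.Nonempty := by
    obtain ⟨w, hw, hweq⟩ := Finset.exists_mem_eq_sup' hTne (g p)
    exact ⟨w, Finset.mem_filter.2 ⟨hw, hweq.symm⟩⟩
  set B : Finset (ℝ × ℝ) := A.image pr with hB
  have hcB : c ∈ convexHull ℝ (B : Set (ℝ × ℝ)) := by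
    by_contra hc
    obtain ⟨ℓ, u, hu1, hu2⟩ := geometric_hahn_banach_point_closed
      (convex_convexHull ℝ _) ((B.finite_toSet.isCompact_convexHull (𝕜 := ℝ)).isClosed) hc
    set q : ℝ × ℝ := (ℓ (1, 0), ℓ (0, 1)) with hq
    have hlq : ∀ v : ℝ × ℝ, dotR q v = ℓ v := by
      intro v
      have hv : v = v.1 • ((1:ℝ), (0:ℝ)) + v.2 • ((0:ℝ), (1:ℝ)) := by
        ext <;> simp
      calc dotR q v = v.1 * ℓ (1, 0) + v.2 * ℓ (0, 1) := by simp only [dotR, hq]; ring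
        _ = ℓ (v.1 • ((1:ℝ), (0:ℝ)) + v.2 • ((0:ℝ), (1:ℝ))) := by
            rw [map_add, map_smul, map_smul]; simp [smul_eq_mul]
        _ = ℓ v := by rw [← hv]
    set η : ℝ := u - ℓ c with hη
    have hη0 : 0 < η := by simp only [hη]; linarith
    have hAneg : ∀ w ∈ A, dotR q (c - pr w) ≤ -η := by
      intro w hw
      have hmem : pr w ∈ convexHull ℝ (B : Set (ℝ × ℝ)) :=
        subset_convexHull ℝ _
          (by simp only [hB, Finset.coe_image, Set.mem_image]; exact ⟨w, hw, rfl⟩)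
      have h2 := hu2 _ hmem
      rw [hlq, map_sub]
      simp only [hη]
      linarith
    set C : ℝ := (Tf Φ).sup' hTne (fun w => |dotR q (c - pr w)|) with hC
    have hCb : ∀ w ∈ Tf Φ, dotR q (c - pr w) ≤ C := by
      intro w hw
      exact le_trans (le_abs_self _)
        (Finset.le_sup' (fun w => |dotR q (c - pr w)|) hw)
    have hC0 : 0 ≤ C := by
      obtain ⟨w, hw⟩ := hTne
      exact le_trans (abs_nonneg _)
        (Finset.le_sup' (fun w => |dotR q (c - pr w)|) hw)
    by_cases hBin : ((Tf Φ) \ A).Nonempty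
    · set γ : ℝ := ((Tf Φ) \ A).inf' hBin (fun w => Ψ p - g p w) with hγ
      have hγ0 : 0 < γ := by
        rw [hγ, Finset.lt_inf'_iff]
        intro w hw
        rw [Finset.mem_sdiff] at hw
        have h1 : g p w ≤ Ψ p := Finset.le_sup' (g p) hw.1
        have h2 : g p w ≠ Ψ p := fun h => hw.2 (Finset.mem_filter.2 ⟨hw.1, h⟩)
        cases lt_or_eq_of_le h1 with
        | inl h => linarith
        | inr h => exact absurd h h2
      set t : ℝ := min (γ / (2 * (C + 1))) 1 with ht
      have ht0 : 0 < t := lt_min (by positivity) one_pos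
      have hkey : Ψ (p + t • q) < Ψ p := by
        rw [hΨ, Finset.sup'_lt_iff]
        intro w hw
        have hgw : g (p + t • q) w = g p w + t * dotR q (c - pr w) := by
          simp only [hg, dotR_add_smul]; ring
        by_cases hwA : w ∈ A
        · have hneg := hAneg w hwA
          have hgeq : g p w = Ψ p := (Finset.mem_filter.1 hwA).2
          rw [hgw, hgeq]
          nlinarith
        · have hwin : w ∈ (Tf Φ) \ A := Finset.mem_sdiff.2 ⟨hw, hwA⟩
          have hγw : γ ≤ Ψ p - g p w := Finset.inf'_le _ hwin
          have htC : t * dotR q (c - pr w) ≤ t * C :=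
            mul_le_mul_of_nonneg_left (hCb w hw) (le_of_lt ht0)
          have htsmall : t * C < γ := by
            have h1 : t ≤ γ / (2 * (C + 1)) := min_le_left _ _
            have h2 : t * C ≤ (γ / (2 * (C + 1))) * C :=
              mul_le_mul_of_nonneg_right h1 hC0
            have h3 : (γ / (2 * (C + 1))) * C < γ := by
              rw [div_mul_eq_mul_div, div_lt_iff₀ (by positivity)]
              nlinarith
            linarith
          rw [hgw]
          linarith
      exact absurd (hglobal (p + t • q)) (not_le.2 hkey)
    · have hall : ∀ w ∈ Tf Φ, w ∈ A := by
        intro w hw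
        by_contra hwA
        exact hBin ⟨w, Finset.mem_sdiff.2 ⟨hw, hwA⟩⟩
      have hkey : Ψ (p + (1:ℝ) • q) < Ψ p := by
        rw [hΨ, Finset.sup'_lt_iff]
        intro w hw
        have hgw : g (p + (1:ℝ) • q) w = g p w + 1 * dotR q (c - pr w) := by
          simp only [hg, dotR_add_smul]; ring
        have hneg := hAneg w (hall w hw)
        have hgeq : g p w = Ψ p := (Finset.mem_filter.1 (hall w hw)).2
        rw [hgw, hgeq]
        linarith
      exact absurd (hglobal (p + (1:ℝ) • q)) (not_le.2 hkey)
  rw [Finset.convexHull_eq] at hcB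
  obtain ⟨ω, hω0, hω1, hωc⟩ := hcB
  set lam : P2 → ℝ := fun z => if z ∈ A then ω (pr z) else 0 with hlam
  have hAT : A ⊆ Tf Φ := Finset.filter_subset _ _
  have hsumA : ∀ ψ : P2 → ℝ, ∑ z ∈ Tf Φ, lam z * ψ z = ∑ z ∈ A, ω (pr z) * ψ z := by
    intro ψ
    rw [← Finset.sum_subset hAT (fun z _ hz => by simp only [hlam, if_neg hz, zero_mul])]
    apply Finset.sum_congr rfl
    intro z hz
    simp only [hlam, if_pos hz]
  have hsumim : ∀ ψ : (ℝ × ℝ) → ℝ, ∑ y ∈ B, ψ y = ∑ z ∈ A, ψ (pr z) := by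
    intro ψ
    rw [hB, Finset.sum_image (fun a _ b _ h => pr_inj h)]
  have hmass : ∑ y ∈ B, ω y • y = c := by
    have h := Finset.centerMass_eq_of_sum_1 B id hω1
    simp only [id_eq] at h
    rw [← h]
    exact hωc
  refine ⟨p, lam, ?_, ?_, ?_, ?_, ?_⟩
  · intro w
    simp only [hlam]
    split
    · exact hω0 _ (by rw [hB]; exact Finset.mem_image_of_mem pr (by assumption))
    · exact le_rfl
  · have h1 := hsumA (fun _ => 1)
    simp only [mul_one] at h1
    rw [h1, ← hsumim ω]
    exact hω1
  · have h1 := hsumA (fun z => ((z.1 : ℝ)))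
    rw [h1]
    have h2 : ∑ z ∈ A, ω (pr z) * ((z.1:ℝ)) = ∑ z ∈ A, (fun y => ω y * y.1) (pr z) := by
      apply Finset.sum_congr rfl
      intro z _
      simp [pr]
    rw [h2, ← hsumim (fun y => ω y * y.1)]
    have h3 : (∑ y ∈ B, ω y • y).1 = ∑ y ∈ B, ω y * y.1 := by
      rw [Prod.fst_sum]
      apply Finset.sum_congr rfl
      intro y _
      simp [smul_eq_mul]
    rw [← h3, hmass]
  · have h1 := hsumA (fun z => ((z.2 : ℝ)))
    rw [h1]
    have h2 : ∑ z ∈ A, ω (pr z) * ((z.2:ℝ)) = ∑ z ∈ A, (fun y => ω y * y.2) (pr z) := by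
      apply Finset.sum_congr rfl
      intro z _
      simp [pr]
    rw [h2, ← hsumim (fun y => ω y * y.2)]
    have h3 : (∑ y ∈ B, ω y • y).2 = ∑ y ∈ B, ω y * y.2 := by
      rw [Prod.snd_sum]
      apply Finset.sum_congr rfl
      intro y _
      simp [smul_eq_mul]
    rw [← h3, hmass]
  · intro w hw hlw w' hw'
    have hwA : w ∈ A := by
      by_contra hwA
      exact hlw (by simp only [hlam, if_neg hwA])
    have hgeq : g p w = Ψ p := (Finset.mem_filter.1 hwA).2
    have h2 : g p w' ≤ Ψ p := Finset.le_sup' (g p) hw'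
    rw [← hgeq] at h2
    simp only [hg, dotR_sub] at h2
    linarith


/-! ### The maximizer set in pair form, and the key exchange inequality -/

def Dset (Φ : ℤ) (f2 : P2 → ℝ) (p : ℝ × ℝ) : Set P2 :=
  {z | inT Φ z ∧ ∀ z', inT Φ z' → f2 z' - dotR p (pr z') ≤ f2 z - dotR p (pr z)}

lemma combo_exists_le (Φ : ℤ) (lam : P2 → ℝ) (h0 : ∀ w, 0 ≤ lam w)
    (h1 : ∑ w ∈ Tf Φ, lam w = 1) (φ : P2 → ℤ) (t : ℝ)
    (hsum : ∑ w ∈ Tf Φ, lam w * ((φ w : ℝ)) = t) :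
    ∃ w ∈ Tf Φ, lam w ≠ 0 ∧ ((φ w : ℝ)) ≤ t := by
  by_contra hcon
  push_neg at hcon
  obtain ⟨w0, hw0, hlw0⟩ : ∃ w ∈ Tf Φ, lam w ≠ 0 := by
    by_contra hc
    push_neg at hc
    have : ∑ w ∈ Tf Φ, lam w = 0 := Finset.sum_eq_zero hc
    rw [h1] at this
    exact one_ne_zero this
  have hlt : ∑ w ∈ Tf Φ, lam w * t < ∑ w ∈ Tf Φ, lam w * ((φ w : ℝ)) := by
    apply Finset.sum_lt_sum
    · intro w hw
      by_cases hl : lam w = 0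
      · simp [hl]
      · have hpos : 0 < lam w := lt_of_le_of_ne (h0 w) (Ne.symm hl)
        exact le_of_lt (mul_lt_mul_of_pos_left (hcon w hw hl) hpos)
    · refine ⟨w0, hw0, ?_⟩
      have hpos : 0 < lam w0 := lt_of_le_of_ne (h0 w0) (Ne.symm hlw0)
      exact mul_lt_mul_of_pos_left (hcon w0 hw0 hlw0) hpos
  rw [← Finset.sum_mul, h1, one_mul, hsum] at hlt
  exact lt_irrefl _ hlt

lemma combo_exists_ge (Φ : ℤ) (lam : P2 → ℝ) (h0 : ∀ w, 0 ≤ lam w)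
    (h1 : ∑ w ∈ Tf Φ, lam w = 1) (φ : P2 → ℤ) (t : ℝ)
    (hsum : ∑ w ∈ Tf Φ, lam w * ((φ w : ℝ)) = t) :
    ∃ w ∈ Tf Φ, lam w ≠ 0 ∧ t ≤ ((φ w : ℝ)) := by
  have hneg : ∑ w ∈ Tf Φ, lam w * (((-(φ w) : ℤ)) : ℝ) = -t := by
    have he : ∀ w ∈ Tf Φ, lam w * (((-(φ w) : ℤ)) : ℝ) = -(lam w * ((φ w : ℝ))) := by
      intro w _; push_cast; ring
    rw [Finset.sum_congr rfl he, Finset.sum_neg_distrib, hsum]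
  obtain ⟨w, hw, hl, hle⟩ := combo_exists_le Φ lam h0 h1 (fun w => -(φ w)) (-t) hneg
  refine ⟨w, hw, hl, ?_⟩
  push_cast at hle
  linarith

/-- Key exchange inequality derived from M♮-convexity of all maximizer sets. -/
lemma key (Φ : ℤ) (hΦ : 0 < Φ) (f2 : P2 → ℝ)
    (H2 : ∀ p : ℝ × ℝ, Mn2 (Dset Φ f2 p)) (x y u v : P2)
    (hx : inT Φ x) (hy : inT Φ y)
    (hs1 : x.1 + y.1 = u.1 + v.1) (hs2 : x.2 + y.2 = u.2 + v.2)
    (ha1 : (u.1 - v.1).natAbs ≤ 1) (ha2 : (u.2 - v.2).natAbs ≤ 1)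
    (ha3 : (u.1 + u.2 - v.1 - v.2).natAbs ≤ 1)
    (hm1 : 1 ≤ x.1 + y.1) (hm2 : 1 ≤ x.2 + y.2)
    (hm3 : x.1 + y.1 + (x.2 + y.2) ≤ 2 * Φ - 1) :
    f2 x + f2 y ≤ f2 u + f2 v := by
  classical
  set c : ℝ × ℝ := (((x.1 + y.1 : ℤ) : ℝ) / 2, ((x.2 + y.2 : ℤ) : ℝ) / 2) with hc
  have hc1 : 1/2 ≤ c.1 := by
    simp only [hc]
    have : (1 : ℝ) ≤ ((x.1 + y.1 : ℤ) : ℝ) := by exact_mod_cast hm1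
    linarith
  have hc2 : 1/2 ≤ c.2 := by
    simp only [hc]
    have : (1 : ℝ) ≤ ((x.2 + y.2 : ℤ) : ℝ) := by exact_mod_cast hm2
    linarith
  have hcs : c.1 + c.2 ≤ (Φ : ℝ) - 1/2 := by
    simp only [hc]
    have : ((x.1 + y.1 : ℤ) : ℝ) + ((x.2 + y.2 : ℤ) : ℝ) ≤ 2 * (Φ : ℝ) - 1 := by
      exact_mod_cast hm3
    linarith
  obtain ⟨p, lam, hl0, hl1, hlf, hls, hlmax⟩ := dual Φ hΦ f2 c hc1 hc2 hcs
  set D : Set P2 := Dset Φ f2 p with hD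
  have hmnD : Mn2 D := H2 p
  have hDfin : D.Finite := by
    apply Set.Finite.subset (Tf Φ).finite_toSet
    intro z hz
    exact mem_Tf.2 hz.1
  have hsupp : ∀ w ∈ Tf Φ, lam w ≠ 0 → w ∈ D := by
    intro w hw hne
    exact ⟨mem_Tf.1 hw, fun z' hz' => hlmax w hw hne z' (mem_Tf.2 hz')⟩
  -- the sum combo
  have hlsum : ∑ w ∈ Tf Φ, lam w * (((w.1 + w.2 : ℤ) : ℝ)) = c.1 + c.2 := by
    rw [← hlf, ← hls, ← Finset.sum_add_distrib]
    apply Finset.sum_congr rfl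
    intro w _
    push_cast
    ring
  -- six witnesses
  have wit1 : ∃ w ∈ D, w.1 ≤ min u.1 v.1 := by
    obtain ⟨w, hw, hne, hle⟩ := combo_exists_le Φ lam hl0 hl1 (fun w => w.1) c.1 hlf
    refine ⟨w, hsupp w hw hne, ?_⟩
    have h2 : (2 * w.1 : ℝ) ≤ ((x.1 + y.1 : ℤ) : ℝ) := by
      simp only [hc] at hle
      push_cast at hle ⊢
      linarith
    have h2' : 2 * w.1 ≤ x.1 + y.1 := by exact_mod_cast h2
    omega
  have wit2 : ∃ w ∈ D, max u.1 v.1 ≤ w.1 := by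
    obtain ⟨w, hw, hne, hle⟩ := combo_exists_ge Φ lam hl0 hl1 (fun w => w.1) c.1 hlf
    refine ⟨w, hsupp w hw hne, ?_⟩
    have h2 : ((x.1 + y.1 : ℤ) : ℝ) ≤ (2 * w.1 : ℝ) := by
      simp only [hc] at hle
      push_cast at hle ⊢
      linarith
    have h2' : x.1 + y.1 ≤ 2 * w.1 := by exact_mod_cast h2
    omega
  have wit3 : ∃ w ∈ D, w.2 ≤ min u.2 v.2 := by
    obtain ⟨w, hw, hne, hle⟩ := combo_exists_le Φ lam hl0 hl1 (fun w => w.2) c.2 hls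
    refine ⟨w, hsupp w hw hne, ?_⟩
    have h2 : (2 * w.2 : ℝ) ≤ ((x.2 + y.2 : ℤ) : ℝ) := by
      simp only [hc] at hle
      push_cast at hle ⊢
      linarith
    have h2' : 2 * w.2 ≤ x.2 + y.2 := by exact_mod_cast h2
    omega
  have wit4 : ∃ w ∈ D, max u.2 v.2 ≤ w.2 := by
    obtain ⟨w, hw, hne, hle⟩ := combo_exists_ge Φ lam hl0 hl1 (fun w => w.2) c.2 hls
    refine ⟨w, hsupp w hw hne, ?_⟩
    have h2 : ((x.2 + y.2 : ℤ) : ℝ) ≤ (2 * w.2 : ℝ) := by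
      simp only [hc] at hle
      push_cast at hle ⊢
      linarith
    have h2' : x.2 + y.2 ≤ 2 * w.2 := by exact_mod_cast h2
    omega
  have wit5 : ∃ w ∈ D, w.1 + w.2 ≤ min (u.1 + u.2) (v.1 + v.2) := by
    obtain ⟨w, hw, hne, hle⟩ := combo_exists_le Φ lam hl0 hl1 (fun w => w.1 + w.2)
      (c.1 + c.2) hlsum
    refine ⟨w, hsupp w hw hne, ?_⟩
    have h2 : (2 * (w.1 + w.2) : ℝ) ≤ ((x.1 + y.1 : ℤ) : ℝ) + ((x.2 + y.2 : ℤ) : ℝ) := by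
      simp only [hc] at hle
      push_cast at hle ⊢
      linarith
    have h2' : 2 * (w.1 + w.2) ≤ (x.1 + y.1) + (x.2 + y.2) := by exact_mod_cast h2
    omega
  have wit6 : ∃ w ∈ D, max (u.1 + u.2) (v.1 + v.2) ≤ w.1 + w.2 := by
    obtain ⟨w, hw, hne, hle⟩ := combo_exists_ge Φ lam hl0 hl1 (fun w => w.1 + w.2)
      (c.1 + c.2) hlsum
    refine ⟨w, hsupp w hw hne, ?_⟩
    have h2 : ((x.1 + y.1 : ℤ) : ℝ) + ((x.2 + y.2 : ℤ) : ℝ) ≤ (2 * (w.1 + w.2) : ℝ) := by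
      simp only [hc] at hle
      push_cast at hle ⊢
      linarith
    have h2' : (x.1 + y.1) + (x.2 + y.2) ≤ 2 * (w.1 + w.2) := by exact_mod_cast h2
    omega
  have huD : u ∈ D := by
    apply fill D hmnD hDfin u
    · obtain ⟨w, hw, hle⟩ := wit1; exact ⟨w, hw, by omega⟩
    · obtain ⟨w, hw, hle⟩ := wit2; exact ⟨w, hw, by omega⟩
    · obtain ⟨w, hw, hle⟩ := wit3; exact ⟨w, hw, by omega⟩
    · obtain ⟨w, hw, hle⟩ := wit4; exact ⟨w, hw, by omega⟩
    · obtain ⟨w, hw, hle⟩ := wit5; exact ⟨w, hw, by omega⟩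
    · obtain ⟨w, hw, hle⟩ := wit6; exact ⟨w, hw, by omega⟩
  have hvD : v ∈ D := by
    apply fill D hmnD hDfin v
    · obtain ⟨w, hw, hle⟩ := wit1; exact ⟨w, hw, by omega⟩
    · obtain ⟨w, hw, hle⟩ := wit2; exact ⟨w, hw, by omega⟩
    · obtain ⟨w, hw, hle⟩ := wit3; exact ⟨w, hw, by omega⟩
    · obtain ⟨w, hw, hle⟩ := wit4; exact ⟨w, hw, by omega⟩
    · obtain ⟨w, hw, hle⟩ := wit5; exact ⟨w, hw, by omega⟩
    · obtain ⟨w, hw, hle⟩ := wit6; exact ⟨w, hw, by omega⟩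
  have hxu : f2 x - dotR p (pr x) ≤ f2 u - dotR p (pr u) := huD.2 x hx
  have hyv : f2 y - dotR p (pr y) ≤ f2 v - dotR p (pr v) := hvD.2 y hy
  have hdot : dotR p (pr x) + dotR p (pr y) = dotR p (pr u) + dotR p (pr v) := by
    simp only [dotR, pr]
    have e1 : ((x.1 : ℝ)) + ((y.1 : ℝ)) = ((u.1 : ℝ)) + ((v.1 : ℝ)) := by exact_mod_cast hs1
    have e2 : ((x.2 : ℝ)) + ((y.2 : ℝ)) = ((u.2 : ℝ)) + ((v.2 : ℝ)) := by exact_mod_cast hs2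
    linear_combination p.1 * e1 + p.2 * e2
  linarith

/-! ### The six local inequalities -/

section LocalIneqs

lemma locC4 (Φ : ℤ) (hΦ : 0 < Φ) (f2 : P2 → ℝ)
    (H2 : ∀ p : ℝ × ℝ, Mn2 (Dset Φ f2 p)) : ∀ a b : ℤ, 0 ≤ a → 0 ≤ b → a + b + 2 ≤ Φ →
    f2 (a, b) + f2 (a+1, b+1) ≤ f2 (a+1, b) + f2 (a, b+1) := by
  intro a b h1 h2 h3
  exact key Φ hΦ f2 H2 (a, b) (a+1, b+1) (a+1, b) (a, b+1)
    ⟨by omega, by omega, by omega⟩ ⟨by omega, by omega, by omega⟩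
    (by omega) (by omega) (by omega) (by omega) (by omega)
    (by omega) (by omega) (by omega)

lemma locC5 (Φ : ℤ) (hΦ : 0 < Φ) (f2 : P2 → ℝ)
    (H2 : ∀ p : ℝ × ℝ, Mn2 (Dset Φ f2 p)) : ∀ a b : ℤ, 0 ≤ a → 0 ≤ b → a + b + 2 ≤ Φ →
    f2 (a+2, b) + f2 (a, b+1) ≤ f2 (a+1, b) + f2 (a+1, b+1) := by
  intro a b h1 h2 h3
  exact key Φ hΦ f2 H2 (a+2, b) (a, b+1) (a+1, b) (a+1, b+1)
    ⟨by omega, by omega, by omega⟩ ⟨by omega, by omega, by omega⟩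
    (by omega) (by omega) (by omega) (by omega) (by omega)
    (by omega) (by omega) (by omega)

lemma locC6 (Φ : ℤ) (hΦ : 0 < Φ) (f2 : P2 → ℝ)
    (H2 : ∀ p : ℝ × ℝ, Mn2 (Dset Φ f2 p)) : ∀ a b : ℤ, 0 ≤ a → 0 ≤ b → a + b + 2 ≤ Φ →
    f2 (a, b+2) + f2 (a+1, b) ≤ f2 (a, b+1) + f2 (a+1, b+1) := by
  intro a b h1 h2 h3
  exact key Φ hΦ f2 H2 (a, b+2) (a+1, b) (a, b+1) (a+1, b+1)
    ⟨by omega, by omega, by omega⟩ ⟨by omega, by omega, by omega⟩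
    (by omega) (by omega) (by omega) (by omega) (by omega)
    (by omega) (by omega) (by omega)

end LocalIneqs

/-! ### Local-to-global: the exchange inequalities for arbitrary pairs -/

section LocalGlobal

variable (Φ : ℤ) (g : P2 → ℝ)

lemma caseA_aux
    (hC1 : ∀ a b : ℤ, 0 ≤ a → 0 ≤ b → a + b + 2 ≤ Φ →
      g (a, b) + g (a+2, b) ≤ 2 * g (a+1, b))
    (hC4 : ∀ a b : ℤ, 0 ≤ a → 0 ≤ b → a + b + 2 ≤ Φ →
      g (a, b) + g (a+1, b+1) ≤ g (a+1, b) + g (a, b+1)) :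
    ∀ n : ℕ, ∀ x1 x2 y1 y2 : ℤ, inT Φ (x1, x2) → inT Φ (y1, y2) →
      y1 < x1 → y2 ≤ x2 → ((x1 - y1) + (x2 - y2)).toNat ≤ n →
      g (x1, x2) + g (y1, y2) ≤ g (x1 - 1, x2) + g (y1 + 1, y2) := by
  intro n
  induction n with
  | zero => intro x1 x2 y1 y2 _ _ h1 h2 hm; omega
  | succ n ih =>
      intro x1 x2 y1 y2 hx hy h1 h2 hm
      obtain ⟨hx1, hx2, hx3⟩ := hx
      obtain ⟨hy1, hy2, hy3⟩ := hy
      by_cases hcc : y2 < x2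
      · -- use C4 at (y1, y2) and IH on (x, (y1, y2+1))
        have hc4 := hC4 y1 y2 hy1 hy2 (by omega)
        have hih := ih x1 x2 y1 (y2+1) ⟨hx1, hx2, hx3⟩ ⟨hy1, by omega, by omega⟩
          h1 (by omega) (by omega)
        linarith
      · have hy2x : y2 = x2 := by omega
        subst hy2x
        by_cases hone : x1 = y1 + 1
        · rw [show x1 - 1 = y1 by omega, show y1 + 1 = x1 by omega]
          linarith
        · have hc1 := hC1 (x1 - 2) y2 (by omega) (by omega) (by omega)
          rw [show x1 - 2 + 2 = x1 by omega, show x1 - 2 + 1 = x1 - 1 by omega] at hc1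
          have hih := ih (x1 - 1) y2 y1 y2 ⟨by omega, by omega, by omega⟩
            ⟨hy1, hy2, hy3⟩ (by omega) le_rfl (by omega)
          rw [show x1 - 1 - 1 = x1 - 2 by ring] at hih
          linarith

lemma caseB_aux
    (hC3 : ∀ a b : ℤ, 0 ≤ a → 0 ≤ b → a + b + 2 ≤ Φ →
      g (a+2, b) + g (a, b+2) ≤ 2 * g (a+1, b+1))
    (hC5 : ∀ a b : ℤ, 0 ≤ a → 0 ≤ b → a + b + 2 ≤ Φ →
      g (a+2, b) + g (a, b+1) ≤ g (a+1, b) + g (a+1, b+1))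
    (hC6 : ∀ a b : ℤ, 0 ≤ a → 0 ≤ b → a + b + 2 ≤ Φ →
      g (a, b+2) + g (a+1, b) ≤ g (a, b+1) + g (a+1, b+1)) :
    ∀ n : ℕ, ∀ x1 x2 y1 y2 : ℤ, inT Φ (x1, x2) → inT Φ (y1, y2) →
      y1 < x1 → x2 < y2 → ((x1 - y1) + (y2 - x2)).toNat ≤ n →
      g (x1, x2) + g (y1, y2) ≤ g (x1 - 1, x2 + 1) + g (y1 + 1, y2 - 1) := by
  intro n
  induction n with
  | zero => intro x1 x2 y1 y2 _ _ h1 h2 hm; omega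
  | succ n ih =>
      intro x1 x2 y1 y2 hx hy h1 h2 hm
      obtain ⟨hx1, hx2, hx3⟩ := hx
      obtain ⟨hy1, hy2, hy3⟩ := hy
      by_cases ha2 : y1 + 2 ≤ x1
      · by_cases hb2 : x2 + 2 ≤ y2
        · -- C3 at (x1-2, x2), IH on ((x1-1, x2+1), y)
          have hc3 := hC3 (x1 - 2) x2 (by omega) hx2 (by omega)
          rw [show x1 - 2 + 2 = x1 by omega, show x1 - 2 + 1 = x1 - 1 by omega] at hc3
          have hih := ih (x1 - 1) (x2 + 1) y1 y2 ⟨by omega, by omega, by omega⟩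
            ⟨hy1, hy2, hy3⟩ (by omega) (by omega) (by omega)
          rw [show x1 - 1 - 1 = x1 - 2 by ring, show x2 + 1 + 1 = x2 + 2 by ring] at hih
          linarith
        · -- y2 = x2 + 1 : C5 at (x1-2, x2), IH on ((x1-1, x2), y)
          have hb1 : y2 = x2 + 1 := by omega
          have hc5 := hC5 (x1 - 2) x2 (by omega) hx2 (by omega)
          rw [show x1 - 2 + 2 = x1 by omega, show x1 - 2 + 1 = x1 - 1 by omega] at hc5
          have hih := ih (x1 - 1) x2 y1 y2 ⟨by omega, hx2, by omega⟩
            ⟨hy1, hy2, hy3⟩ (by omega) h2 (by omega)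
          rw [show x1 - 1 - 1 = x1 - 2 by omega] at hih
          linarith
      · have ha1 : x1 = y1 + 1 := by omega
        by_cases hb2 : x2 + 2 ≤ y2
        · -- C6 at (y1, y2 - 2), IH on (x, (y1, y2 - 1))
          have hc6 := hC6 y1 (y2 - 2) hy1 (by omega) (by omega)
          rw [show y2 - 2 + 2 = y2 by omega, show y2 - 2 + 1 = y2 - 1 by omega] at hc6
          have hih := ih x1 x2 y1 (y2 - 1) ⟨hx1, hx2, hx3⟩ ⟨hy1, by omega, by omega⟩
            h1 (by omega) (by omega)
          rw [show y2 - 1 - 1 = y2 - 2 by omega] at hih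
          linarith
        · have hb1 : y2 = x2 + 1 := by omega
          rw [show x1 - 1 = y1 by omega, show x2 + 1 = y2 by omega,
            show y1 + 1 = x1 by omega, show y2 - 1 = x2 by omega]
          linarith

end LocalGlobal

/-! ### Bridging with the `Fin 2 → ℤ` world -/

lemma vec_eta (w : Fin 2 → ℤ) : ![w 0, w 1] = w := by
  funext k
  fin_cases k <;> rfl

lemma mem_TPhi_vec (Φ : ℤ) (a b : ℤ) :
    (![a, b] ∈ TPhi Φ) ↔ inT Φ (a, b) := by
  simp [TPhi, inT]

lemma mem_TPhi_iff (Φ : ℤ) (w : Fin 2 → ℤ) :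
    w ∈ TPhi Φ ↔ inT Φ (w 0, w 1) := Iff.rfl

lemma exp0n (x : Fin 2 → ℤ) : x - Pi.single 0 1 + chi none = ![x 0 - 1, x 1] := by
  funext k
  fin_cases k <;>
    simp [chi, Pi.single_apply, Pi.sub_apply, Pi.add_apply]

lemma exp0s (x : Fin 2 → ℤ) : x - Pi.single 0 1 + chi (some 1) = ![x 0 - 1, x 1 + 1] := by
  funext k
  fin_cases k <;>
    simp [chi, Pi.single_apply, Pi.sub_apply, Pi.add_apply]

lemma exp0n' (x : Fin 2 → ℤ) : x + Pi.single 0 1 - chi none = ![x 0 + 1, x 1] := by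
  funext k
  fin_cases k <;>
    simp [chi, Pi.single_apply, Pi.sub_apply, Pi.add_apply]

lemma exp0s' (x : Fin 2 → ℤ) : x + Pi.single 0 1 - chi (some 1) = ![x 0 + 1, x 1 - 1] := by
  funext k
  fin_cases k <;>
    simp [chi, Pi.single_apply, Pi.sub_apply, Pi.add_apply]

lemma exp1n (x : Fin 2 → ℤ) : x - Pi.single 1 1 + chi none = ![x 0, x 1 - 1] := by
  funext k
  fin_cases k <;>
    simp [chi, Pi.single_apply, Pi.sub_apply, Pi.add_apply]

lemma exp1s (x : Fin 2 → ℤ) : x - Pi.single 1 1 + chi (some 0) = ![x 0 + 1, x 1 - 1] := by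
  funext k
  fin_cases k <;>
    simp [chi, Pi.single_apply, Pi.sub_apply, Pi.add_apply]

lemma exp1n' (x : Fin 2 → ℤ) : x + Pi.single 1 1 - chi none = ![x 0, x 1 + 1] := by
  funext k
  fin_cases k <;>
    simp [chi, Pi.single_apply, Pi.sub_apply, Pi.add_apply]

lemma exp1s' (x : Fin 2 → ℤ) : x + Pi.single 1 1 - chi (some 0) = ![x 0 - 1, x 1 + 1] := by
  funext k
  fin_cases k <;>
    simp [chi, Pi.single_apply, Pi.sub_apply, Pi.add_apply]

/-- Derivation of `Mn2` for the pair-form maximizer sets from the main hypothesis. -/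
lemma H2_of (Φ : ℤ) (f : (Fin 2 → ℤ) → ℝ)
    (H : ∀ p : Fin 2 → ℝ, MnConvexSet (maximizerSet Φ f p)) (p2 : ℝ × ℝ) :
    Mn2 (Dset Φ (fun z : P2 => f ![z.1, z.2]) p2) := by
  classical
  set f2 : P2 → ℝ := fun z : P2 => f ![z.1, z.2] with hf2
  set pv : Fin 2 → ℝ := ![p2.1, p2.2] with hpv
  have hval : ∀ w : Fin 2 → ℤ,
      f w - inner2 pv w = f2 (w 0, w 1) - dotR p2 (pr (w 0, w 1)) := by
    intro w
    have h1 : f w = f2 (w 0, w 1) := by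
      simp only [hf2]
      rw [vec_eta w]
    have h2 : inner2 pv w = dotR p2 (pr (w 0, w 1)) := by
      simp [inner2, dotR, pr, hpv]
    rw [h1, h2]
  have hvalz : ∀ z : P2, f ![z.1, z.2] - inner2 pv ![z.1, z.2] = f2 z - dotR p2 (pr z) := by
    intro z
    have := hval ![z.1, z.2]
    simpa using this
  have hmem : ∀ z : P2, z ∈ Dset Φ f2 p2 ↔ ![z.1, z.2] ∈ maximizerSet Φ f pv := by
    intro z
    constructor
    · rintro ⟨hzT, hzmax⟩
      refine ⟨(mem_TPhi_vec Φ z.1 z.2).2 hzT, ?_⟩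
      intro w hw
      have h := hzmax (w 0, w 1) ((mem_TPhi_iff Φ w).1 hw)
      rw [hval w, hvalz z]
      exact h
    · rintro ⟨hzT, hzmax⟩
      refine ⟨(mem_TPhi_vec Φ z.1 z.2).1 hzT, ?_⟩
      intro z' hz'
      have h := hzmax ![z'.1, z'.2] ((mem_TPhi_vec Φ z'.1 z'.2).2 hz')
      rw [hvalz z', hvalz z] at h
      exact h
  intro z hz w hw
  have hzv := (hmem z).1 hz
  have hwv := (hmem w).1 hw
  constructor
  · intro hlt
    have hlt' : (![w.1, w.2] : Fin 2 → ℤ) 0 < (![z.1, z.2] : Fin 2 → ℤ) 0 := by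
      simpa using hlt
    obtain ⟨j, hj, h1, h2⟩ := H pv ![z.1, z.2] hzv ![w.1, w.2] hwv 0 hlt'
    match j with
    | none =>
        left
        rw [exp0n] at h1
        rw [exp0n'] at h2
        simp only [Matrix.cons_val_zero, Matrix.cons_val_one, Matrix.head_cons] at h1 h2
        exact ⟨(hmem (z.1 - 1, z.2)).2 h1, (hmem (w.1 + 1, w.2)).2 h2⟩
    | some 0 =>
        have := hj 0 rfl
        simp at this
        omega
    | some 1 =>
        right
        have hlt2 := hj 1 rfl
        simp only [Matrix.cons_val_one, Matrix.head_cons] at hlt2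
        rw [exp0s] at h1
        rw [exp0s'] at h2
        simp only [Matrix.cons_val_zero, Matrix.cons_val_one, Matrix.head_cons] at h1 h2
        exact ⟨hlt2, (hmem (z.1 - 1, z.2 + 1)).2 h1, (hmem (w.1 + 1, w.2 - 1)).2 h2⟩
  · intro hlt
    have hlt' : (![w.1, w.2] : Fin 2 → ℤ) 1 < (![z.1, z.2] : Fin 2 → ℤ) 1 := by
      simpa using hlt
    obtain ⟨j, hj, h1, h2⟩ := H pv ![z.1, z.2] hzv ![w.1, w.2] hwv 1 hlt'
    match j with
    | none =>
        left
        rw [exp1n] at h1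
        rw [exp1n'] at h2
        simp only [Matrix.cons_val_zero, Matrix.cons_val_one, Matrix.head_cons] at h1 h2
        exact ⟨(hmem (z.1, z.2 - 1)).2 h1, (hmem (w.1, w.2 + 1)).2 h2⟩
    | some 1 =>
        have := hj 1 rfl
        simp at this
        omega
    | some 0 =>
        right
        have hlt2 := hj 0 rfl
        simp only [Matrix.cons_val_zero] at hlt2
        rw [exp1s] at h1
        rw [exp1s'] at h2
        simp only [Matrix.cons_val_zero, Matrix.cons_val_one, Matrix.head_cons] at h1 h2
        exact ⟨hlt2, (hmem (z.1 + 1, z.2 - 1)).2 h1, (hmem (w.1 - 1, w.2 + 1)).2 h2⟩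

/-- Forward direction: M♮-concavity implies all maximizer sets are M♮-convex. -/
lemma forward_dir (Φ : ℤ) (f : (Fin 2 → ℤ) → ℝ) (hf : MnConcaveOn Φ f) :
    ∀ p : Fin 2 → ℝ, MnConvexSet (maximizerSet Φ f p) := by
  intro p x hx y hy i hi
  obtain ⟨j, hj, hxT, hyT, hineq⟩ := hf x hx.1 y hy.1 i hi
  have hinner : inner2 p (x - Pi.single i 1 + chi j) + inner2 p (y + Pi.single i 1 - chi j) =
      inner2 p x + inner2 p y := by
    simp only [inner2, Pi.sub_apply, Pi.add_apply]
    push_cast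
    ring
  have hxy : f x - inner2 p x = f y - inner2 p y :=
    le_antisymm (hy.2 x hx.1) (hx.2 y hy.1)
  have hx' : f (x - Pi.single i 1 + chi j) - inner2 p (x - Pi.single i 1 + chi j) ≤
      f x - inner2 p x := hx.2 _ hxT
  have hy' : f (y + Pi.single i 1 - chi j) - inner2 p (y + Pi.single i 1 - chi j) ≤
      f x - inner2 p x := hx.2 _ hyT
  have hx'eq : f (x - Pi.single i 1 + chi j) - inner2 p (x - Pi.single i 1 + chi j) =
      f x - inner2 p x := by linarith
  have hy'eq : f (y + Pi.single i 1 - chi j) - inner2 p (y + Pi.single i 1 - chi j) =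
      f x - inner2 p x := by linarith
  refine ⟨j, hj, ⟨hxT, ?_⟩, ⟨hyT, ?_⟩⟩
  · intro w hw
    rw [hx'eq]
    exact hx.2 w hw
  · intro w hw
    rw [hy'eq]
    exact hx.2 w hw

end Stmt5Aux

theorem stmt5 (Φ : ℤ) (hΦ : 0 < Φ) (f : (Fin 2 → ℤ) → ℝ) :
    MnConcaveOn Φ f ↔ ∀ p : Fin 2 → ℝ, MnConvexSet (maximizerSet Φ f p) := by
  constructor
  · exact Stmt5Aux.forward_dir Φ f
  · intro H
    classical
    set f2 : Stmt5Aux.P2 → ℝ := fun z => f ![z.1, z.2] with hf2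
    have H2 : ∀ p2 : ℝ × ℝ, Stmt5Aux.Mn2 (Stmt5Aux.Dset Φ f2 p2) := fun p2 =>
      Stmt5Aux.H2_of Φ f H p2
    have h4 := Stmt5Aux.locC4 Φ hΦ f2 H2
    have h5 := Stmt5Aux.locC5 Φ hΦ f2 H2
    have h6 := Stmt5Aux.locC6 Φ hΦ f2 H2
    have h1 : ∀ a b : ℤ, 0 ≤ a → 0 ≤ b → a + b + 2 ≤ Φ →
        f2 (a, b) + f2 (a+2, b) ≤ 2 * f2 (a+1, b) := by
      intro a b ha hb hs; linarith [h4 a b ha hb hs, h5 a b ha hb hs]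
    have h2 : ∀ a b : ℤ, 0 ≤ a → 0 ≤ b → a + b + 2 ≤ Φ →
        f2 (a, b) + f2 (a, b+2) ≤ 2 * f2 (a, b+1) := by
      intro a b ha hb hs; linarith [h4 a b ha hb hs, h6 a b ha hb hs]
    have h3 : ∀ a b : ℤ, 0 ≤ a → 0 ≤ b → a + b + 2 ≤ Φ →
        f2 (a+2, b) + f2 (a, b+2) ≤ 2 * f2 (a+1, b+1) := by
      intro a b ha hb hs; linarith [h5 a b ha hb hs, h6 a b ha hb hs]
    set g2 : Stmt5Aux.P2 → ℝ := fun z => f2 (z.2, z.1) with hg2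
    have h1' : ∀ a b : ℤ, 0 ≤ a → 0 ≤ b → a + b + 2 ≤ Φ →
        g2 (a, b) + g2 (a+2, b) ≤ 2 * g2 (a+1, b) := by
      intro a b ha hb hs
      have := h2 b a hb ha (by omega)
      simp only [hg2]
      linarith
    have h3' : ∀ a b : ℤ, 0 ≤ a → 0 ≤ b → a + b + 2 ≤ Φ →
        g2 (a+2, b) + g2 (a, b+2) ≤ 2 * g2 (a+1, b+1) := by
      intro a b ha hb hs
      have := h3 b a hb ha (by omega)
      simp only [hg2]
      linarith
    have h4' : ∀ a b : ℤ, 0 ≤ a → 0 ≤ b → a + b + 2 ≤ Φ →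
        g2 (a, b) + g2 (a+1, b+1) ≤ g2 (a+1, b) + g2 (a, b+1) := by
      intro a b ha hb hs
      have := h4 b a hb ha (by omega)
      simp only [hg2]
      linarith
    have h5' : ∀ a b : ℤ, 0 ≤ a → 0 ≤ b → a + b + 2 ≤ Φ →
        g2 (a+2, b) + g2 (a, b+1) ≤ g2 (a+1, b) + g2 (a+1, b+1) := by
      intro a b ha hb hs
      have := h6 b a hb ha (by omega)
      simp only [hg2]
      linarith
    have h6' : ∀ a b : ℤ, 0 ≤ a → 0 ≤ b → a + b + 2 ≤ Φ →
        g2 (a, b+2) + g2 (a+1, b) ≤ g2 (a, b+1) + g2 (a+1, b+1) := by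
      intro a b ha hb hs
      have := h5 b a hb ha (by omega)
      simp only [hg2]
      linarith
    have cA : ∀ x1 x2 y1 y2 : ℤ, Stmt5Aux.inT Φ (x1, x2) → Stmt5Aux.inT Φ (y1, y2) →
        y1 < x1 → y2 ≤ x2 → f2 (x1, x2) + f2 (y1, y2) ≤ f2 (x1 - 1, x2) + f2 (y1 + 1, y2) :=
      fun x1 x2 y1 y2 hx hy hlt hle =>
        Stmt5Aux.caseA_aux Φ f2 h1 h4 ((x1 - y1) + (x2 - y2)).toNat x1 x2 y1 y2 hx hy hlt hle
          le_rfl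
    have cB : ∀ x1 x2 y1 y2 : ℤ, Stmt5Aux.inT Φ (x1, x2) → Stmt5Aux.inT Φ (y1, y2) →
        y1 < x1 → x2 < y2 →
        f2 (x1, x2) + f2 (y1, y2) ≤ f2 (x1 - 1, x2 + 1) + f2 (y1 + 1, y2 - 1) :=
      fun x1 x2 y1 y2 hx hy hlt hle =>
        Stmt5Aux.caseB_aux Φ f2 h3 h5 h6 ((x1 - y1) + (y2 - x2)).toNat x1 x2 y1 y2 hx hy hlt
          hle le_rfl
    have cA' : ∀ x1 x2 y1 y2 : ℤ, Stmt5Aux.inT Φ (x1, x2) → Stmt5Aux.inT Φ (y1, y2) →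
        y1 < x1 → y2 ≤ x2 → g2 (x1, x2) + g2 (y1, y2) ≤ g2 (x1 - 1, x2) + g2 (y1 + 1, y2) :=
      fun x1 x2 y1 y2 hx hy hlt hle =>
        Stmt5Aux.caseA_aux Φ g2 h1' h4' ((x1 - y1) + (x2 - y2)).toNat x1 x2 y1 y2 hx hy hlt hle
          le_rfl
    have cB' : ∀ x1 x2 y1 y2 : ℤ, Stmt5Aux.inT Φ (x1, x2) → Stmt5Aux.inT Φ (y1, y2) →
        y1 < x1 → x2 < y2 →
        g2 (x1, x2) + g2 (y1, y2) ≤ g2 (x1 - 1, x2 + 1) + g2 (y1 + 1, y2 - 1) :=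
      fun x1 x2 y1 y2 hx hy hlt hle =>
        Stmt5Aux.caseB_aux Φ g2 h3' h5' h6' ((x1 - y1) + (y2 - x2)).toNat x1 x2 y1 y2 hx hy hlt
          hle le_rfl
    intro x hx y hy i hi
    have hfx : f x = f2 (x 0, x 1) := by
      simp only [hf2]
      rw [Stmt5Aux.vec_eta]
    have hfy : f y = f2 (y 0, y 1) := by
      simp only [hf2]
      rw [Stmt5Aux.vec_eta]
    have hxT : Stmt5Aux.inT Φ (x 0, x 1) := hx
    have hyT : Stmt5Aux.inT Φ (y 0, y 1) := hy
    obtain ⟨hx1, hx2, hx3⟩ := hxT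
    obtain ⟨hy1, hy2, hy3⟩ := hyT
    have hi01 : i = 0 ∨ i = 1 := by
      rcases i with ⟨iv, hv⟩
      interval_cases iv
      · exact Or.inl rfl
      · exact Or.inr rfl
    rcases hi01 with rfl | rfl
    · -- i = 0, hi : y 0 < x 0
      rcases le_or_gt (y 1) (x 1) with hc | hc
      · refine ⟨none, fun j' (h : none = some j') => by simp at h, ?_, ?_, ?_⟩
        · rw [Stmt5Aux.exp0n]
          exact (Stmt5Aux.mem_TPhi_vec Φ _ _).2 ⟨by omega, by omega, by omega⟩
        · rw [Stmt5Aux.exp0n']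
          exact (Stmt5Aux.mem_TPhi_vec Φ _ _).2 ⟨by omega, by omega, by omega⟩
        · rw [Stmt5Aux.exp0n, Stmt5Aux.exp0n', hfx, hfy]
          exact cA (x 0) (x 1) (y 0) (y 1) ⟨hx1, hx2, hx3⟩ ⟨hy1, hy2, hy3⟩ hi hc
      · refine ⟨some 1, ?_, ?_, ?_, ?_⟩
        · intro j' h
          injection h with h'
          subst h'
          simpa using hc
        · rw [Stmt5Aux.exp0s]
          exact (Stmt5Aux.mem_TPhi_vec Φ _ _).2 ⟨by omega, by omega, by omega⟩
        · rw [Stmt5Aux.exp0s']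
          exact (Stmt5Aux.mem_TPhi_vec Φ _ _).2 ⟨by omega, by omega, by omega⟩
        · rw [Stmt5Aux.exp0s, Stmt5Aux.exp0s', hfx, hfy]
          exact cB (x 0) (x 1) (y 0) (y 1) ⟨hx1, hx2, hx3⟩ ⟨hy1, hy2, hy3⟩ hi hc
    · -- i = 1, hi : y 1 < x 1
      rcases le_or_gt (y 0) (x 0) with hc | hc
      · refine ⟨none, fun j' (h : none = some j') => by simp at h, ?_, ?_, ?_⟩
        · rw [Stmt5Aux.exp1n]
          exact (Stmt5Aux.mem_TPhi_vec Φ _ _).2 ⟨by omega, by omega, by omega⟩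
        · rw [Stmt5Aux.exp1n']
          exact (Stmt5Aux.mem_TPhi_vec Φ _ _).2 ⟨by omega, by omega, by omega⟩
        · rw [Stmt5Aux.exp1n, Stmt5Aux.exp1n', hfx, hfy]
          exact cA' (x 1) (x 0) (y 1) (y 0) ⟨hx2, hx1, by omega⟩ ⟨hy2, hy1, by omega⟩ hi hc
      · refine ⟨some 0, ?_, ?_, ?_, ?_⟩
        · intro j' h
          injection h with h'
          subst h'
          simpa using hc
        · rw [Stmt5Aux.exp1s]
          exact (Stmt5Aux.mem_TPhi_vec Φ _ _).2 ⟨by omega, by omega, by omega⟩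
        · rw [Stmt5Aux.exp1s']
          exact (Stmt5Aux.mem_TPhi_vec Φ _ _).2 ⟨by omega, by omega, by omega⟩
        · rw [Stmt5Aux.exp1s, Stmt5Aux.exp1s', hfx, hfy]
          exact cB' (x 1) (x 0) (y 1) (y 0) ⟨hx2, hx1, by omega⟩ ⟨hy2, hy1, by omega⟩ hi hc
end
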